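/- arXiv:1604.03343 — 8 statements merged into one kernel-verified Lean document; each statement's English description precedes it below -/
import Mathlib

section
/- Let P be a set of finite binary strings and let t : P → ℕ satisfy t(p) ≥ 1 for all p ∈ P. Define A = Σ_{i=1}^∞ 2^{-i} · Σ_{p ∈ P, t(p)·2^{|p|} ≤ 2^i} 2^{-|p|} and B = Σ_{p ∈ P} 2^{-2|p|}/t(p), where all sums take values in [0,∞]. Then B ≤ A ≤ 2·B. -/
open scoped ENNReal

lemma shift_sum (m : ℕ) (g : ℕ → ℝ≥0∞) :
    (∑' i : ℕ, if m ≤ i then g i else 0) = ∑' j : ℕ, g (m + j) := by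
  have hinj : Function.Injective (fun j : ℕ => m + j) := fun a b h => by simpa using h
  have h0 : (Function.support fun i : ℕ => if m ≤ i then g i else 0)
      ⊆ Set.range (fun j : ℕ => m + j) := by
    intro x hx
    have hm : m ≤ x := by
      by_contra h
      simp [h] at hx
    exact ⟨x - m, by simp; omega⟩
  have := hinj.tsum_eq (f := fun i : ℕ => if m ≤ i then g i else 0) h0
  rw [← this]
  exact tsum_congr fun j => by simp

lemma geom (m : ℕ) :
    ∑' j : ℕ, ((2:ℝ≥0∞) ^ (m + j))⁻¹ = 2 * ((2:ℝ≥0∞) ^ m)⁻¹ := by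
  have h : ∀ j : ℕ, ((2:ℝ≥0∞) ^ (m + j))⁻¹ = ((2:ℝ≥0∞) ^ m)⁻¹ * ((2:ℝ≥0∞)⁻¹) ^ j := by
    intro j
    rw [pow_add, ENNReal.mul_inv (Or.inl (pow_ne_zero m two_ne_zero))
      (Or.inl (ENNReal.pow_ne_top ENNReal.ofNat_ne_top))]
    congr 1
    exact ENNReal.inv_pow
  simp_rw [h]
  rw [ENNReal.tsum_mul_left, ENNReal.tsum_geometric, ENNReal.one_sub_inv_two, inv_inv, mul_comm]

lemma key (c : ℕ) (hc : 1 ≤ c) :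
    (∑' i : ℕ, if c ≤ 2 ^ (i+1) then ((2:ℝ≥0∞) ^ (i+1))⁻¹ else 0)
      = 2 * ((2:ℝ≥0∞) ^ (max (Nat.clog 2 c) 1))⁻¹ := by
  set k := max (Nat.clog 2 c) 1 with hk
  have hcond : ∀ i : ℕ, (c ≤ 2 ^ (i+1)) ↔ (k - 1 ≤ i) := by
    intro i
    rw [← Nat.clog_le_iff_le_pow (by norm_num : 1 < 2)]
    omega
  simp_rw [hcond]
  rw [shift_sum (k-1) (fun i => ((2:ℝ≥0∞) ^ (i+1))⁻¹)]
  have h2 : ∀ j : ℕ, (k - 1 + j + 1) = k + j := fun j => by omega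
  simp_rw [h2]
  exact geom k

lemma key_lower (c : ℕ) (hc : 1 ≤ c) :
    ((c : ℝ≥0∞))⁻¹ ≤ ∑' i : ℕ, if c ≤ 2 ^ (i+1) then ((2:ℝ≥0∞) ^ (i+1))⁻¹ else 0 := by
  rw [key c hc]
  set k := max (Nat.clog 2 c) 1 with hk
  have hk1 : 1 ≤ k := le_max_right _ _
  have hpow : 2 ^ (k - 1) ≤ c := by
    rcases eq_or_lt_of_le hc with h | h
    · have : Nat.clog 2 c = 0 := by rw [← h]; simp
      simp [hk, this, ← h]
    · have hclog : 1 ≤ Nat.clog 2 c := Nat.clog_pos (by norm_num) h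
      have hlt := Nat.pow_pred_clog_lt_self (by norm_num : 1 < 2) h
      rw [Nat.pred_eq_sub_one] at hlt
      have hke : k = Nat.clog 2 c := by omega
      rw [hke]
      exact hlt.le
  have h2 : (2:ℝ≥0∞) ^ k = 2 * 2 ^ (k - 1) := by
    rw [← pow_succ']
    congr 1
    omega
  rw [h2, ENNReal.mul_inv (Or.inl two_ne_zero) (Or.inl ENNReal.ofNat_ne_top), ← mul_assoc,
    ENNReal.mul_inv_cancel two_ne_zero ENNReal.ofNat_ne_top, one_mul]
  apply ENNReal.inv_le_inv'
  exact_mod_cast hpow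

lemma key_upper (c : ℕ) (hc : 1 ≤ c) :
    (∑' i : ℕ, if c ≤ 2 ^ (i+1) then ((2:ℝ≥0∞) ^ (i+1))⁻¹ else 0) ≤ 2 * ((c : ℝ≥0∞))⁻¹ := by
  rw [key c hc]
  apply mul_le_mul_right
  apply ENNReal.inv_le_inv'
  have h1 : c ≤ 2 ^ max (Nat.clog 2 c) 1 :=
    le_trans (Nat.le_pow_clog (by norm_num) c) (Nat.pow_le_pow_right (by norm_num) (le_max_left _ _))
  exact_mod_cast h1

/-- Proposition 1 of the paper, in abstract form: with `P` the set of programs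
computing a fixed string and `t p` the running time of `p`, the quantity
`A = ∑_{i=1}^∞ 2^{-i} ∑_{p ∈ P, t(p)·2^{|p|} ≤ 2^i} 2^{-|p|}` satisfies
`B ≤ A ≤ 2·B`, where `B = ∑_{p ∈ P} 2^{-2|p|}/t(p)`. -/
theorem stmt_0 (P : Set (List Bool)) (t : List Bool → ℕ)
    (ht : ∀ p ∈ P, 1 ≤ t p) :
    (∑' p : {p : List Bool // p ∈ P},
        ((2 : ENNReal) ^ (2 * p.val.length))⁻¹ / (t p.val : ENNReal)) ≤
      (∑' i : ℕ, ((2 : ENNReal) ^ (i + 1))⁻¹ *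
        ∑' p : {p : List Bool // p ∈ P ∧ t p * 2 ^ p.length ≤ 2 ^ (i + 1)},
          ((2 : ENNReal) ^ p.val.length)⁻¹) ∧
    (∑' i : ℕ, ((2 : ENNReal) ^ (i + 1))⁻¹ *
        ∑' p : {p : List Bool // p ∈ P ∧ t p * 2 ^ p.length ≤ 2 ^ (i + 1)},
          ((2 : ENNReal) ^ p.val.length)⁻¹) ≤
      2 * ∑' p : {p : List Bool // p ∈ P},
        ((2 : ENNReal) ^ (2 * p.val.length))⁻¹ / (t p.val : ENNReal) := by
  classical
  have hcpos : ∀ p ∈ P, 1 ≤ t p * 2 ^ p.length := fun p hp =>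
    Nat.mul_pos (ht p hp) (Nat.two_pow_pos _)
  have hpt : ∀ p ∈ P, ((2:ℝ≥0∞) ^ (2 * p.length))⁻¹ / (t p : ℝ≥0∞)
      = ((2:ℝ≥0∞) ^ p.length)⁻¹ * (((t p * 2 ^ p.length : ℕ) : ℝ≥0∞))⁻¹ := by
    intro p hp
    have h1 : ((t p * 2 ^ p.length : ℕ) : ℝ≥0∞) = (t p : ℝ≥0∞) * 2 ^ p.length := by
      push_cast; ring
    rw [h1, ENNReal.mul_inv (Or.inr (ENNReal.pow_ne_top ENNReal.ofNat_ne_top))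
      (Or.inl (ENNReal.natCast_ne_top _)), div_eq_mul_inv, two_mul, pow_add,
      ENNReal.mul_inv (Or.inl (pow_ne_zero _ two_ne_zero))
        (Or.inl (ENNReal.pow_ne_top ENNReal.ofNat_ne_top))]
    ring
  have hB : (∑' p : {p : List Bool // p ∈ P},
        ((2 : ℝ≥0∞) ^ (2 * p.val.length))⁻¹ / (t p.val : ℝ≥0∞))
      = ∑' x : List Bool, Set.indicator P
          (fun p => ((2:ℝ≥0∞) ^ (2 * p.length))⁻¹ / (t p : ℝ≥0∞)) x :=
    tsum_subtype P (fun p => ((2:ℝ≥0∞) ^ (2 * p.length))⁻¹ / (t p : ℝ≥0∞))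
  have hA : (∑' i : ℕ, ((2 : ℝ≥0∞) ^ (i + 1))⁻¹ *
        ∑' p : {p : List Bool // p ∈ P ∧ t p * 2 ^ p.length ≤ 2 ^ (i + 1)},
          ((2 : ℝ≥0∞) ^ p.val.length)⁻¹)
      = ∑' x : List Bool, Set.indicator P
          (fun p => ((2:ℝ≥0∞) ^ p.length)⁻¹ *
            ∑' i : ℕ, if t p * 2 ^ p.length ≤ 2 ^ (i+1)
              then ((2:ℝ≥0∞) ^ (i+1))⁻¹ else 0) x := by
    have step1 : ∀ i : ℕ, ((2 : ℝ≥0∞) ^ (i + 1))⁻¹ *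
          ∑' p : {p : List Bool // p ∈ P ∧ t p * 2 ^ p.length ≤ 2 ^ (i + 1)},
            ((2 : ℝ≥0∞) ^ p.val.length)⁻¹
        = ∑' x : List Bool, Set.indicator {p | p ∈ P ∧ t p * 2 ^ p.length ≤ 2 ^ (i+1)}
            (fun p => ((2:ℝ≥0∞) ^ (i+1))⁻¹ * ((2:ℝ≥0∞) ^ p.length)⁻¹) x := by
      intro i
      exact (ENNReal.tsum_mul_left).symm.trans
        (tsum_subtype {p | p ∈ P ∧ t p * 2 ^ p.length ≤ 2 ^ (i+1)}
          (fun p => ((2:ℝ≥0∞) ^ (i+1))⁻¹ * ((2:ℝ≥0∞) ^ p.length)⁻¹))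
    calc (∑' i : ℕ, ((2 : ℝ≥0∞) ^ (i + 1))⁻¹ *
          ∑' p : {p : List Bool // p ∈ P ∧ t p * 2 ^ p.length ≤ 2 ^ (i + 1)},
            ((2 : ℝ≥0∞) ^ p.val.length)⁻¹)
        = ∑' i : ℕ, ∑' x : List Bool,
            Set.indicator {p | p ∈ P ∧ t p * 2 ^ p.length ≤ 2 ^ (i+1)}
              (fun p => ((2:ℝ≥0∞) ^ (i+1))⁻¹ * ((2:ℝ≥0∞) ^ p.length)⁻¹) x :=
          tsum_congr step1
      _ = ∑' x : List Bool, ∑' i : ℕ,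
            Set.indicator {p | p ∈ P ∧ t p * 2 ^ p.length ≤ 2 ^ (i+1)}
              (fun p => ((2:ℝ≥0∞) ^ (i+1))⁻¹ * ((2:ℝ≥0∞) ^ p.length)⁻¹) x :=
          ENNReal.tsum_comm
      _ = _ := by
          refine tsum_congr fun x => ?_
          by_cases hx : x ∈ P
          · rw [Set.indicator_of_mem hx]
            have hterm : ∀ i : ℕ,
                Set.indicator {p | p ∈ P ∧ t p * 2 ^ p.length ≤ 2 ^ (i+1)}
                  (fun p => ((2:ℝ≥0∞) ^ (i+1))⁻¹ * ((2:ℝ≥0∞) ^ p.length)⁻¹) x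
                = ((2:ℝ≥0∞) ^ x.length)⁻¹ *
                    (if t x * 2 ^ x.length ≤ 2 ^ (i+1)
                      then ((2:ℝ≥0∞) ^ (i+1))⁻¹ else 0) := by
              intro i
              by_cases h : t x * 2 ^ x.length ≤ 2 ^ (i+1)
              · rw [Set.indicator_of_mem (Set.mem_setOf.mpr ⟨hx, h⟩)]
                simp [h, mul_comm]
              · rw [Set.indicator_of_notMem (by simp [Set.mem_setOf_eq, h])]
                simp [h]
            simp_rw [hterm]
            rw [ENNReal.tsum_mul_left]
          · rw [Set.indicator_of_notMem hx]
            have hterm : ∀ i : ℕ,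
                Set.indicator {p | p ∈ P ∧ t p * 2 ^ p.length ≤ 2 ^ (i+1)}
                  (fun p => ((2:ℝ≥0∞) ^ (i+1))⁻¹ * ((2:ℝ≥0∞) ^ p.length)⁻¹) x = 0 :=
              fun i => Set.indicator_of_notMem (fun h => hx h.1) _
            simp_rw [hterm]
            exact tsum_zero
  constructor
  · rw [hA, hB]
    refine ENNReal.tsum_le_tsum fun x => ?_
    by_cases hx : x ∈ P
    · rw [Set.indicator_of_mem hx, Set.indicator_of_mem hx, hpt x hx]
      exact mul_le_mul_right (key_lower _ (hcpos x hx)) _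
    · simp [Set.indicator_of_notMem hx]
  · rw [hA, hB, ← ENNReal.tsum_mul_left]
    refine ENNReal.tsum_le_tsum fun x => ?_
    by_cases hx : x ∈ P
    · rw [Set.indicator_of_mem hx, Set.indicator_of_mem hx, hpt x hx]
      calc (((2:ℝ≥0∞) ^ x.length)⁻¹ *
            ∑' i : ℕ, if t x * 2 ^ x.length ≤ 2 ^ (i+1)
              then ((2:ℝ≥0∞) ^ (i+1))⁻¹ else 0)
          ≤ ((2:ℝ≥0∞) ^ x.length)⁻¹ *
              (2 * (((t x * 2 ^ x.length : ℕ) : ℝ≥0∞))⁻¹) :=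
            mul_le_mul_right (key_upper _ (hcpos x hx)) _
        _ = 2 * (((2:ℝ≥0∞) ^ x.length)⁻¹ * (((t x * 2 ^ x.length : ℕ) : ℝ≥0∞))⁻¹) := by
            ring
    · simp [Set.indicator_of_notMem hx]
end

section
/- Let P be a set of finite binary strings and let t : P → ℕ satisfy t(p) ≥ 1 for all p ∈ P. Define A = Σ_{i=1}^∞ 2^{-i} · N_i, where N_i ∈ [0,∞] is the number of p ∈ P with t(p)·2^{|p|} ≤ 2^i (i.e., the sum over such p of 1), and define S = Σ_{p ∈ P} 2^{-|p|}/t(p), where all sums take values in [0,∞]. Then S ≤ A ≤ 2·S. -/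
lemma geomtail (k : ℕ) :
    (∑' i : ℕ, if k ≤ i then ((2 : ENNReal) ^ (i + 1))⁻¹ else 0) = ((2 : ENNReal) ^ k)⁻¹ := by
  have hinj : Function.Injective (fun j : ℕ => j + k) := fun a b h => by simpa using h
  have h0 : Function.support (fun i : ℕ => if k ≤ i then ((2 : ENNReal) ^ (i + 1))⁻¹ else 0)
      ⊆ Set.range (fun j : ℕ => j + k) := by
    intro x hx
    by_cases h : k ≤ x
    · exact ⟨x - k, by simp [Nat.sub_add_cancel h]⟩
    · simp [Function.mem_support, if_neg h] at hx
  rw [← hinj.tsum_eq h0]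
  have heq : ∀ j : ℕ, (if k ≤ j + k then ((2 : ENNReal) ^ (j + k + 1))⁻¹ else 0)
      = ((2:ENNReal)^(k+1))⁻¹ * ((2:ENNReal)⁻¹)^j := by
    intro j
    rw [if_pos (Nat.le_add_left k j)]
    rw [← ENNReal.inv_pow, ← ENNReal.mul_inv (by simp) (by simp), ← pow_add]
    congr 2
    omega
  simp only [heq]
  rw [ENNReal.tsum_mul_left, ENNReal.tsum_geometric]
  have h2 : (1 : ENNReal) - 2⁻¹ = 2⁻¹ := by
    rw [ENNReal.sub_eq_of_eq_add (by simp)]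
    rw [ENNReal.inv_two_add_inv_two]
  rw [h2, inv_inv, pow_succ, ENNReal.mul_inv (by simp) (by simp)]
  rw [mul_assoc, ENNReal.inv_mul_cancel (by simp) (by simp), mul_one]

lemma keysum (c : ℕ) (hc : 1 ≤ c) :
    (∑' i : ℕ, if c ≤ 2 ^ (i + 1) then ((2 : ENNReal) ^ (i + 1))⁻¹ else 0)
      = ((2 : ENNReal) ^ (max (Nat.clog 2 c) 1 - 1))⁻¹ := by
  rw [← geomtail]
  congr 1
  ext i
  congr 1
  have h1 : c ≤ 2 ^ (i + 1) ↔ Nat.clog 2 c ≤ i + 1 := (Nat.clog_le_iff_le_pow one_lt_two).symm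
  rw [eq_iff_iff, h1]
  omega

lemma keylow (c : ℕ) (hc : 1 ≤ c) :
    ((c : ENNReal))⁻¹ ≤ ((2 : ENNReal) ^ (max (Nat.clog 2 c) 1 - 1))⁻¹ := by
  rw [ENNReal.inv_le_inv]
  have : (2 : ℕ) ^ (max (Nat.clog 2 c) 1 - 1) ≤ c := by
    rcases le_or_gt (Nat.clog 2 c) 1 with h | h
    · simpa [Nat.max_eq_right h] using hc
    · rw [Nat.max_eq_left h.le]
      have hc1 : 1 < c := by
        by_contra hcon
        have : c = 1 := by omega
        simp [this, Nat.clog_one_right] at h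
      exact (Nat.pow_pred_clog_lt_self one_lt_two hc1).le
  calc ((2:ENNReal) ^ (max (Nat.clog 2 c) 1 - 1)) = ((2^(max (Nat.clog 2 c) 1 - 1) : ℕ) : ENNReal) := by push_cast; ring
    _ ≤ (c : ENNReal) := by exact_mod_cast this

lemma keyhigh (c : ℕ) (hc : 1 ≤ c) :
    ((2 : ENNReal) ^ (max (Nat.clog 2 c) 1 - 1))⁻¹ ≤ 2 * ((c : ENNReal))⁻¹ := by
  set m := max (Nat.clog 2 c) 1 with hm
  have hm1 : 1 ≤ m := le_max_right _ _
  have h1 : (2 : ENNReal) ^ m = 2 * 2 ^ (m - 1) := by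
    rw [← pow_succ']
    congr 1
    omega
  have h2 : ((2:ENNReal) ^ (m-1))⁻¹ = 2 * ((2:ENNReal)^m)⁻¹ := by
    rw [h1, ENNReal.mul_inv (by simp) (by simp), ← mul_assoc,
      ENNReal.mul_inv_cancel (by simp) (by simp), one_mul]
  rw [h2]
  gcongr
  have : c ≤ 2 ^ m := by
    calc c ≤ 2 ^ Nat.clog 2 c := Nat.le_pow_clog one_lt_two c
      _ ≤ 2 ^ m := Nat.pow_le_pow_right (by norm_num) (le_max_left _ _)
  calc (c : ENNReal) ≤ ((2 ^ m : ℕ) : ENNReal) := by exact_mod_cast this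
    _ = (2:ENNReal) ^ m := by push_cast; ring

/-- Proposition 2 of the paper, in abstract form: with `P` the set of programs
computing a fixed string and `t p` the running time of `p`, the quantity
`A = ∑_{i=1}^∞ 2^{-i} · #{p ∈ P : t(p)·2^{|p|} ≤ 2^i}` satisfies
`S ≤ A ≤ 2·S`, where `S = ∑_{p ∈ P} 2^{-|p|}/t(p)`. -/
theorem stmt_1 (P : Set (List Bool)) (t : List Bool → ℕ)
    (ht : ∀ p ∈ P, 1 ≤ t p) :
    (∑' p : {p : List Bool // p ∈ P},
        ((2 : ENNReal) ^ p.val.length)⁻¹ / (t p.val : ENNReal)) ≤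
      (∑' i : ℕ, ((2 : ENNReal) ^ (i + 1))⁻¹ *
        ∑' _p : {p : List Bool // p ∈ P ∧ t p * 2 ^ p.length ≤ 2 ^ (i + 1)},
          (1 : ENNReal)) ∧
    (∑' i : ℕ, ((2 : ENNReal) ^ (i + 1))⁻¹ *
        ∑' _p : {p : List Bool // p ∈ P ∧ t p * 2 ^ p.length ≤ 2 ^ (i + 1)},
          (1 : ENNReal)) ≤
      2 * ∑' p : {p : List Bool // p ∈ P},
        ((2 : ENNReal) ^ p.val.length)⁻¹ / (t p.val : ENNReal) := by
  classical
  set c : List Bool → ℕ := fun p => t p * 2 ^ p.length with hcdef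
  have hc1 : ∀ p ∈ P, 1 ≤ c p := by
    intro p hp
    have := ht p hp
    have h2 : 1 ≤ 2 ^ p.length := Nat.one_le_two_pow
    calc 1 = 1 * 1 := by ring
      _ ≤ t p * 2 ^ p.length := Nat.mul_le_mul this h2
  -- rewrite A
  have hA : (∑' i : ℕ, ((2 : ENNReal) ^ (i + 1))⁻¹ *
        ∑' _p : {p : List Bool // p ∈ P ∧ t p * 2 ^ p.length ≤ 2 ^ (i + 1)},
          (1 : ENNReal))
      = ∑' p : List Bool,
          Set.indicator P (fun q => ((2 : ENNReal) ^ (max (Nat.clog 2 (c q)) 1 - 1))⁻¹) p := by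
    have h1 : ∀ i : ℕ, (∑' _p : {p : List Bool // p ∈ P ∧ t p * 2 ^ p.length ≤ 2 ^ (i + 1)},
          (1 : ENNReal))
        = ∑' p : List Bool,
            Set.indicator {q | q ∈ P ∧ t q * 2 ^ q.length ≤ 2 ^ (i + 1)} (fun _ => 1) p :=
      fun i => tsum_subtype ({q | q ∈ P ∧ t q * 2 ^ q.length ≤ 2 ^ (i + 1)} : Set (List Bool))
        (fun _ => (1 : ENNReal))
    simp only [h1, ← ENNReal.tsum_mul_left]
    rw [ENNReal.tsum_comm]
    apply tsum_congr
    intro p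
    by_cases hp : p ∈ P
    · rw [Set.indicator_of_mem hp, ← keysum (c p) (hc1 p hp)]
      apply tsum_congr
      intro i
      rw [Set.indicator_apply]
      by_cases hcond : t p * 2 ^ p.length ≤ 2 ^ (i + 1)
      · rw [if_pos (show p ∈ {q | q ∈ P ∧ t q * 2 ^ q.length ≤ 2 ^ (i + 1)} from ⟨hp, hcond⟩),
          if_pos (show c p ≤ 2 ^ (i + 1) from hcond), mul_one]
      · rw [if_neg (by simp [Set.mem_setOf_eq, hcond]),
          if_neg (show ¬ c p ≤ 2 ^ (i + 1) from hcond), mul_zero]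
    · rw [Set.indicator_of_notMem hp]
      apply ENNReal.tsum_eq_zero.mpr
      intro i
      rw [Set.indicator_of_notMem (by simp [Set.mem_setOf_eq, hp]), mul_zero]
  -- rewrite S
  have hS : (∑' p : {p : List Bool // p ∈ P},
        ((2 : ENNReal) ^ p.val.length)⁻¹ / (t p.val : ENNReal))
      = ∑' p : List Bool, Set.indicator P (fun q => ((c q : ENNReal))⁻¹) p := by
    rw [tsum_subtype P (fun q => ((2 : ENNReal) ^ q.length)⁻¹ / (t q : ENNReal))]
    apply tsum_congr
    intro p
    by_cases hp : p ∈ P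
    · rw [Set.indicator_of_mem hp, Set.indicator_of_mem hp]
      show ((2 : ENNReal) ^ p.length)⁻¹ / (t p : ENNReal) = ((c p : ENNReal))⁻¹
      have : ((c p : ℕ) : ENNReal) = (t p : ENNReal) * (2 : ENNReal) ^ p.length := by
        simp only [hcdef]
        push_cast
        ring
      rw [this, ENNReal.mul_inv (Or.inr (by simp)) (Or.inl (ENNReal.natCast_ne_top _)),
        mul_comm, div_eq_mul_inv]
    · rw [Set.indicator_of_notMem hp, Set.indicator_of_notMem hp]
  rw [hA, hS]
  constructor
  · apply ENNReal.tsum_le_tsum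
    intro p
    by_cases hp : p ∈ P
    · rw [Set.indicator_of_mem hp, Set.indicator_of_mem hp]
      exact keylow (c p) (hc1 p hp)
    · rw [Set.indicator_of_notMem hp, Set.indicator_of_notMem hp]
  · rw [← ENNReal.tsum_mul_left]
    apply ENNReal.tsum_le_tsum
    intro p
    by_cases hp : p ∈ P
    · rw [Set.indicator_of_mem hp, Set.indicator_of_mem hp]
      exact keyhigh (c p) (hc1 p hp)
    · rw [Set.indicator_of_notMem hp, Set.indicator_of_notMem hp, mul_zero]
end

section
/- Fix n ∈ ℕ. Let μ : {0,1}^n → [0,1] satisfy Σ_{x ∈ {0,1}^n} μ(x) = 1, and let S : {0,1}^n → [0,∞) satisfy S(x) ≥ c·μ(x)/(a + b·(-log₂ μ(x)))^d for every x with μ(x) > 0, where c > 0, a ≥ 1, b ≥ 0 and d ≥ 1. Then the relative entropy D_n(μ‖S) := Σ_{x ∈ {0,1}^n, μ(x)>0} μ(x)·ln(μ(x)/S(x)) satisfies D_n(μ‖S) ≤ d·ln(a + b·n) − ln c. -/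
/-- The core entropy estimate in the proof of Theorem 1 of the paper: if `μ` is
a probability distribution on `{0,1}^n` and `S(x) ≥ c·μ(x)/(a + b·(−log₂ μ(x)))^d`
whenever `μ(x) > 0`, then the relative entropy
`D_n(μ‖S) = ∑_{μ(x)>0} μ(x)·ln(μ(x)/S(x))` is at most `d·ln(a + b·n) − ln c`. -/
theorem stmt_6 (n : ℕ) (μ S : (Fin n → Bool) → ℝ) (c a b d : ℝ)
    (hμ0 : ∀ x, 0 ≤ μ x) (hμ1 : ∀ x, μ x ≤ 1) (hμsum : ∑ x, μ x = 1)
    (hS0 : ∀ x, 0 ≤ S x)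
    (hc : 0 < c) (ha : 1 ≤ a) (hb : 0 ≤ b) (hd : 1 ≤ d)
    (hS : ∀ x, 0 < μ x →
      c * μ x / (a + b * (-Real.logb 2 (μ x))) ^ d ≤ S x) :
    (∑ x, if 0 < μ x then μ x * Real.log (μ x / S x) else 0) ≤
      d * Real.log (a + b * n) - Real.log c := by
  classical
  set T := Finset.univ.filter (fun x => 0 < μ x) with hT
  have hμT : ∀ x ∈ T, 0 < μ x := fun x hx => (Finset.mem_filter.mp hx).2
  have hsumT : ∑ x ∈ T, μ x = 1 := by
    rw [hT, Finset.sum_filter_of_ne]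
    · exact hμsum
    · intro x _ hne
      exact lt_of_le_of_ne (hμ0 x) (Ne.symm hne)
  have hTne : T.Nonempty := by
    apply Finset.nonempty_of_sum_ne_zero (f := μ)
    rw [hsumT]; norm_num
  set t : (Fin n → Bool) → ℝ := fun x => -Real.logb 2 (μ x) with ht
  have ht0 : ∀ x ∈ T, 0 ≤ t x := by
    intro x hx
    have : Real.logb 2 (μ x) ≤ 0 :=
      Real.logb_nonpos (by norm_num) (le_of_lt (hμT x hx)) (hμ1 x)
    simp [ht]; linarith
  have hpt : ∀ x ∈ T, (0:ℝ) < a + b * t x := by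
    intro x hx
    have := ht0 x hx
    nlinarith
  -- rewrite LHS as sum over T
  have hLHS : (∑ x, if 0 < μ x then μ x * Real.log (μ x / S x) else 0)
      = ∑ x ∈ T, μ x * Real.log (μ x / S x) := by
    rw [hT, Finset.sum_filter]
  rw [hLHS]
  -- pointwise bound
  have hpoint : ∀ x ∈ T, μ x * Real.log (μ x / S x)
      ≤ μ x * (d * Real.log (a + b * t x) - Real.log c) := by
    intro x hx
    have hμx := hμT x hx
    have hptx := hpt x hx
    have hPpos : (0:ℝ) < (a + b * t x) ^ d := Real.rpow_pos_of_pos hptx d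
    have hSx : c * μ x / (a + b * t x) ^ d ≤ S x := hS x hμx
    have hSpos : 0 < S x :=
      lt_of_lt_of_le (by positivity) hSx
    have hdiv : μ x / S x ≤ (a + b * t x) ^ d / c := by
      rw [div_le_div_iff₀ hSpos hc]
      calc μ x * c = c * μ x := by ring
        _ ≤ S x * (a + b * t x) ^ d := by
            rw [div_le_iff₀ hPpos] at hSx; linarith
        _ = (a + b * t x) ^ d * S x := by ring
    have hlog : Real.log (μ x / S x) ≤ d * Real.log (a + b * t x) - Real.log c := by
      calc Real.log (μ x / S x) ≤ Real.log ((a + b * t x) ^ d / c) :=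
            Real.log_le_log (by positivity) hdiv
        _ = Real.log ((a + b * t x) ^ d) - Real.log c :=
            Real.log_div (ne_of_gt hPpos) (ne_of_gt hc)
        _ = d * Real.log (a + b * t x) - Real.log c := by
            rw [Real.log_rpow hptx]
    exact mul_le_mul_of_nonneg_left hlog (le_of_lt hμx)
  have step1 : ∑ x ∈ T, μ x * Real.log (μ x / S x)
      ≤ ∑ x ∈ T, μ x * (d * Real.log (a + b * t x) - Real.log c) :=
    Finset.sum_le_sum hpoint
  have hconc : ConcaveOn ℝ (Set.Ioi (0:ℝ)) Real.log :=
    strictConcaveOn_log_Ioi.concaveOn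
  -- Jensen for entropy
  have hent : ∑ x ∈ T, μ x * Real.log (μ x)⁻¹ ≤ Real.log (T.card) := by
    have hj := hconc.le_map_sum (t := T) (w := μ) (p := fun x => (μ x)⁻¹)
      (fun x hx => le_of_lt (hμT x hx)) hsumT
      (fun x hx => Set.mem_Ioi.mpr (inv_pos.mpr (hμT x hx)))
    have hsum : ∑ x ∈ T, μ x * (μ x)⁻¹ = (T.card : ℝ) := by
      rw [Finset.sum_congr rfl (fun x hx => by
        rw [mul_inv_cancel₀ (ne_of_gt (hμT x hx))])]
      simp
    simp only [smul_eq_mul] at hj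
    rw [hsum] at hj
    exact hj
  set Hb := ∑ x ∈ T, μ x * t x with hHb
  have hHb0 : 0 ≤ Hb :=
    Finset.sum_nonneg fun x hx => mul_nonneg (le_of_lt (hμT x hx)) (ht0 x hx)
  have hHbn : Hb ≤ (n : ℝ) := by
    have hrw : Hb = (∑ x ∈ T, μ x * Real.log (μ x)⁻¹) / Real.log 2 := by
      rw [hHb, Finset.sum_div]
      refine Finset.sum_congr rfl fun x hx => ?_
      rw [ht]
      simp only [Real.logb, Real.log_inv]
      ring
    have hcard : (T.card : ℝ) ≤ (2:ℝ) ^ n := by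
      have : T.card ≤ Fintype.card (Fin n → Bool) := Finset.card_le_univ T
      have h2 : Fintype.card (Fin n → Bool) = 2 ^ n := by simp
      calc (T.card : ℝ) ≤ (Fintype.card (Fin n → Bool) : ℝ) := by exact_mod_cast this
        _ = (2:ℝ) ^ n := by rw [h2]; push_cast; ring
    have hcpos : (0:ℝ) < T.card := by exact_mod_cast Finset.card_pos.mpr hTne
    have hlogcard : Real.log (T.card) ≤ n * Real.log 2 := by
      calc Real.log (T.card) ≤ Real.log ((2:ℝ) ^ n) := Real.log_le_log hcpos hcard
        _ = n * Real.log 2 := by rw [Real.log_pow]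
    have hlog2 : (0:ℝ) < Real.log 2 := Real.log_pos (by norm_num)
    rw [hrw, div_le_iff₀ hlog2]
    calc ∑ x ∈ T, μ x * Real.log (μ x)⁻¹ ≤ Real.log (T.card) := hent
      _ ≤ n * Real.log 2 := hlogcard
  -- Jensen for the main sum
  have hjensen : ∑ x ∈ T, μ x * Real.log (a + b * t x) ≤ Real.log (a + b * Hb) := by
    have hj := hconc.le_map_sum (t := T) (w := μ) (p := fun x => a + b * t x)
      (fun x hx => le_of_lt (hμT x hx)) hsumT
      (fun x hx => Set.mem_Ioi.mpr (hpt x hx))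
    have hsum : ∑ x ∈ T, μ x * (a + b * t x) = a + b * Hb := by
      simp only [mul_add, Finset.sum_add_distrib, hHb]
      rw [← Finset.sum_mul, hsumT, Finset.mul_sum]
      congr 1
      · ring
      · exact Finset.sum_congr rfl fun x hx => by ring
    simp only [smul_eq_mul] at hj
    rw [hsum] at hj
    exact hj
  have step2 : ∑ x ∈ T, μ x * (d * Real.log (a + b * t x) - Real.log c)
      = d * (∑ x ∈ T, μ x * Real.log (a + b * t x)) - Real.log c := by
    have hcong : ∀ x ∈ T, μ x * (d * Real.log (a + b * t x) - Real.log c)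
        = d * (μ x * Real.log (a + b * t x)) - μ x * Real.log c := fun x _ => by ring
    rw [Finset.sum_congr rfl hcong, Finset.sum_sub_distrib, ← Finset.mul_sum,
      ← Finset.sum_mul, hsumT, one_mul]
  have hd0 : (0:ℝ) ≤ d := by linarith
  have hfin : Real.log (a + b * Hb) ≤ Real.log (a + b * n) := by
    apply Real.log_le_log (by nlinarith)
    nlinarith
  calc ∑ x ∈ T, μ x * Real.log (μ x / S x)
      ≤ ∑ x ∈ T, μ x * (d * Real.log (a + b * t x) - Real.log c) := step1
    _ = d * (∑ x ∈ T, μ x * Real.log (a + b * t x)) - Real.log c := step2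
    _ ≤ d * Real.log (a + b * Hb) - Real.log c := by
        have := mul_le_mul_of_nonneg_left hjensen hd0
        linarith
    _ ≤ d * Real.log (a + b * n) - Real.log c := by
        have := mul_le_mul_of_nonneg_left hfin hd0
        linarith
end

section
/- Fix n ∈ ℕ. Let μ be a measure on finite binary strings (μ(ε) = 1 and μ(x) = μ(x0) + μ(x1) for all x), let ℓ : {1,…,n} × {0,1} × {0,1} → [0,1] be a loss function, and let S be a semimeasure with S(x) > 0 whenever μ(x) > 0 and |x| ≤ n. For a semimeasure ρ, call Λ : {0,1}^{<n} → {0,1} a ρ-predictor if for every string x of length t−1 ≤ n−1 with ρ(x) > 0, Λ(x) minimises y ↦ Σ_{b ∈ {0,1}} ρ(b|x)·ℓ(t, b, y). For a predictor Λ, let L^Λ_{nμ} = Σ_{x ∈ {0,1}^n} μ(x)·Σ_{t=1}^n ℓ(t, x_t, Λ(x_{1:t−1})). Suppose moreover that S(x) ≥ c·μ(x)/(a + b·(−log₂ μ(x)))^d for every x of length n with μ(x) > 0, where c > 0, a ≥ 1, b ≥ 0, d ≥ 1. Then for any μ-predictor Λ_μ and any S-predictor Λ_S, L^{Λ_S}_{nμ}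 − L^{Λ_μ}_{nμ} ≤ 2·D_n + 2·√(L^{Λ_μ}_{nμ}·D_n), where D_n = d·ln(a + b·n) − ln c. -/
/-- A semimeasure: `ν(ε) ≤ 1` and `ν(x0) + ν(x1) ≤ ν(x)`, with nonnegative values. -/
def IsSemimeasure (ν : List Bool → ℝ) : Prop :=
  (∀ x, 0 ≤ ν x) ∧ ν [] ≤ 1 ∧ ∀ x, ν (x ++ [false]) + ν (x ++ [true]) ≤ ν x

/-- A measure: `μ(ε) = 1` and `μ(x0) + μ(x1) = μ(x)`, with nonnegative values. -/
def IsMeasure (μ : List Bool → ℝ) : Prop :=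
  (∀ x, 0 ≤ μ x) ∧ μ [] = 1 ∧ ∀ x, μ (x ++ [false]) + μ (x ++ [true]) = μ x

/-- `Λ` is a `ρ`-predictor (for horizon `n` and loss `ℓ`): on every string `x` of
length `t − 1 ≤ n − 1` with `ρ(x) > 0`, `Λ(x)` minimises
`y ↦ ∑_b ρ(b|x)·ℓ(t, b, y)`. -/
def IsPredictor (n : ℕ) (ℓ : ℕ → Bool → Bool → ℝ) (ρ : List Bool → ℝ)
    (Λ : List Bool → Bool) : Prop :=
  ∀ x : List Bool, x.length < n → 0 < ρ x → ∀ y : Bool,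
    ρ (x ++ [false]) / ρ x * ℓ (x.length + 1) false (Λ x) +
        ρ (x ++ [true]) / ρ x * ℓ (x.length + 1) true (Λ x) ≤
      ρ (x ++ [false]) / ρ x * ℓ (x.length + 1) false y +
        ρ (x ++ [true]) / ρ x * ℓ (x.length + 1) true y

/-- `Loss n ℓ μ Λ = L^Λ_{nμ} = ∑_{x ∈ {0,1}^n} μ(x) ∑_{t=1}^n ℓ(t, x_t, Λ(x_{1:t−1}))`,
the total `μ`-expected loss of predictor `Λ` over the first `n` steps. -/
def Loss (n : ℕ) (ℓ : ℕ → Bool → Bool → ℝ) (μ : List Bool → ℝ)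
    (Λ : List Bool → Bool) : ℝ :=
  ∑ v : Fin n → Bool, μ (List.ofFn v) *
    ∑ t : Fin n, ℓ ((t : ℕ) + 1) (v t) (Λ ((List.ofFn v).take t))


open Real


/-- `1 - 1/t ≤ log t` for `t > 0`. -/
lemma SP_log_lb {t : ℝ} (ht : 0 < t) : 1 - 1/t ≤ Real.log t := by
  have h := Real.log_le_sub_one_of_pos (x := 1/t) (by positivity)
  rw [Real.log_div one_ne_zero (ne_of_gt ht)] at h
  rw [one_div]
  simp at h
  linarith

/-- quadratic lower bound for exp. -/
lemma SP_exp_quad {w : ℝ} (hw : 0 ≤ w) : 1 + w + w^2/2 ≤ Real.exp w := by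
  have key : ∀ x : ℝ, 0 ≤ x → 1 + x + x^2/2 ≤ Real.exp x := by
    intro x hx
    have h0 : MonotoneOn (fun y : ℝ => Real.exp y - 1 - y - y^2/2) (Set.Ici 0) := by
      apply monotoneOn_of_deriv_nonneg (convex_Ici 0)
      · fun_prop
      · fun_prop
      · intro y hy
        have hder : HasDerivAt (fun y : ℝ => Real.exp y - 1 - y - y^2/2)
            (Real.exp y - 0 - 1 - y) y := by
          have h1 : HasDerivAt (fun y : ℝ => Real.exp y) (Real.exp y) y := Real.hasDerivAt_exp y
          have h2 : HasDerivAt (fun y : ℝ => y^2/2) y y := by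
            simpa using (hasDerivAt_pow 2 y).div_const 2
          exact (((h1.sub_const 1).sub (hasDerivAt_id y)).sub h2).congr_deriv (by ring)
        rw [hder.deriv]
        have := Real.add_one_le_exp y
        linarith
    have := h0 (Set.mem_Ici.2 le_rfl) (Set.mem_Ici.2 hx) hx
    simp at this
    linarith
  exact key w hw

/-- `x - log(1+x) ≤ x^2/2` for `x ≥ 0`. -/
lemma SP_g_pos {x : ℝ} (hx : 0 ≤ x) : x - Real.log (1+x) ≤ x^2/2 := by
  rcases le_or_gt x 1 with hx1 | hx1
  · -- via exp bound:  exp(x - x^2/2) ≤ 1 + x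
    have h1x : (0:ℝ) < 1 + x := by linarith
    have key : Real.exp (x - x^2/2) ≤ 1 + x := by
      -- (1+x) * exp (x^2/2 - x) ≥ 1 via monotonicity
      have h0 : MonotoneOn (fun y : ℝ => (1+y) * Real.exp (y^2/2 - y)) (Set.Icc 0 1) := by
        apply monotoneOn_of_deriv_nonneg (convex_Icc 0 1)
        · fun_prop
        · fun_prop
        · intro y hy
          simp only [interior_Icc, Set.mem_Ioo] at hy
          have hder : HasDerivAt (fun y : ℝ => (1+y) * Real.exp (y^2/2 - y))
              (Real.exp (y^2/2 - y) + (1+y) * (Real.exp (y^2/2 - y) * (y - 1))) y := by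
            have h1 : HasDerivAt (fun y : ℝ => y^2/2 - y) (y - 1) y := by
              have := ((hasDerivAt_pow 2 y).div_const 2).sub (hasDerivAt_id y)
              exact this.congr_deriv (by norm_num)
            have h2 := h1.exp
            have h3 : HasDerivAt (fun y : ℝ => 1 + y) 1 y := by
              simpa using (hasDerivAt_id y).const_add 1
            exact (h3.mul h2).congr_deriv (by ring)
          rw [hder.deriv]
          have he : 0 < Real.exp (y^2/2 - y) := Real.exp_pos _
          have : Real.exp (y^2/2 - y) + (1+y) * (Real.exp (y^2/2 - y) * (y - 1))
              = Real.exp (y^2/2 - y) * y^2 := by ring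
          rw [this]
          positivity
      have h01 : (fun y : ℝ => (1+y) * Real.exp (y^2/2 - y)) 0 ≤ (fun y : ℝ => (1+y) * Real.exp (y^2/2 - y)) x :=
        h0 (by simp [Set.mem_Icc]) (by simp [Set.mem_Icc]; exact ⟨hx, hx1⟩) hx
      simp at h01
      -- h01 : 1 ≤ (1+x) * exp (x^2/2 - x)
      have := Real.exp_pos (x^2/2 - x)
      rw [show x - x^2/2 = -(x^2/2 - x) by ring, Real.exp_neg]
      rw [inv_le_iff_one_le_mul₀ this]
      nlinarith [h01]
    have := (Real.le_log_iff_exp_le h1x).2 key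
    linarith
  · -- x ≥ 1 : x - x^2/2 ≤ 1/2 < log 2 ≤ log (1+x)
    have h2 : Real.log 2 ≤ Real.log (1+x) :=
      Real.log_le_log (by norm_num) (by linarith)
    have h3 : (0.6931471803 : ℝ) < Real.log 2 := Real.log_two_gt_d9
    nlinarith

/-- `-t - log(1-t) ≤ t^2/(2*(1-t))` for `0 ≤ t < 1`. -/
lemma SP_g_neg {t : ℝ} (ht : 0 ≤ t) (ht1 : t < 1) :
    -t - Real.log (1-t) ≤ t^2/(2*(1-t)) := by
  have h1t : (0:ℝ) < 1 - t := by linarith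
  set s : ℝ := t^2/(2*(1-t)) with hs
  have hs0 : 0 ≤ s := by positivity
  have key : 1/(1-t) ≤ Real.exp (t + s) := by
    have h := SP_exp_quad (w := t + s) (by linarith)
    have halg : 1/(1-t) ≤ 1 + (t+s) + (t+s)^2/2 := by
      rw [div_le_iff₀ h1t]
      have hsd : s * (2*(1-t)) = t^2 := by
        rw [hs]; field_simp
      nlinarith [sq_nonneg s, sq_nonneg (t+s), mul_nonneg hs0 ht]
    linarith
  have hlog : Real.log (1/(1-t)) ≤ t + s := by
    rw [Real.log_le_iff_le_exp (by positivity)]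
    exact key
  rw [one_div, Real.log_inv] at hlog
  linarith

section Dual

/-- Convex-duality step inequality: for `y ≥ 0`, `z ≥ 0` (`z > 0` if `y > 0`), `x > -1`:
`(y - z)·x ≤ [y log(y/z)] - y + z + y·(x - log(1+x))`. -/
lemma SP_dual {y z x : ℝ} (hy : 0 ≤ y) (hz : 0 ≤ z) (hpos : 0 < y → 0 < z)
    (hx : -1 < x) :
    (y - z) * x ≤ (if 0 < y then y * Real.log (y/z) else 0) - y + z
      + y * (x - Real.log (1+x)) := by
  rcases eq_or_lt_of_le hy with hy0 | hy0
  · rw [if_neg (by rw [← hy0]; exact lt_irrefl 0)]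
    rw [← hy0]
    nlinarith
  · have hz0 := hpos hy0
    rw [if_pos hy0]
    have h1x : (0:ℝ) < 1 + x := by linarith
    have ht : (0:ℝ) < z * (1+x) / y := by positivity
    have key := Real.log_le_sub_one_of_pos ht
    have hexp : Real.log (z * (1+x) / y) = Real.log (1+x) - Real.log (y/z) := by
      rw [Real.log_div (by positivity) (ne_of_gt hy0), Real.log_mul (ne_of_gt hz0) (ne_of_gt h1x),
        Real.log_div (ne_of_gt hy0) (ne_of_gt hz0)]
      ring
    rw [hexp] at key
    -- key : log(1+x) - log(y/z) ≤ z(1+x)/y - 1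
    have hml := mul_le_mul_of_nonneg_left key (le_of_lt hy0)
    have h4 : y * (z * (1+x) / y - 1) = z * (1+x) - y := by
      field_simp
    rw [h4] at hml
    nlinarith [hml]

/-- Nonnegativity of the conditional divergence. -/
lemma SP_Dc_nonneg {y₀ y₁ z₀ z₁ : ℝ} (hy₀ : 0 ≤ y₀) (hy₁ : 0 ≤ y₁)
    (hsum : y₀ + y₁ = 1) (hz₀ : 0 ≤ z₀) (hz₁ : 0 ≤ z₁) (hzsum : z₀ + z₁ ≤ 1)
    (hpos₀ : 0 < y₀ → 0 < z₀) (hpos₁ : 0 < y₁ → 0 < z₁) :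
    0 ≤ (if 0 < y₀ then y₀ * Real.log (y₀/z₀) else 0)
      + (if 0 < y₁ then y₁ * Real.log (y₁/z₁) else 0) := by
  have key : ∀ y z : ℝ, 0 ≤ y → 0 ≤ z → (0 < y → 0 < z) →
      y - z ≤ (if 0 < y then y * Real.log (y/z) else 0) := by
    intro y z hy hz hpos
    rcases eq_or_lt_of_le hy with hy0 | hy0
    · rw [if_neg (by rw [← hy0]; exact lt_irrefl 0)]; linarith
    · have hz0 := hpos hy0
      rw [if_pos hy0]
      have := SP_log_lb (t := y/z) (by positivity)
      have h2 := mul_le_mul_of_nonneg_left this (le_of_lt hy0)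
      have h3 : y * (1 - 1/(y/z)) = y - z := by field_simp
      linarith [h3 ▸ h2]
  have k0 := key y₀ z₀ hy₀ hz₀ hpos₀
  have k1 := key y₁ z₁ hy₁ hz₁ hpos₁
  linarith

set_option maxHeartbeats 1000000 in
/-- The κ-family inequality (main case `δ₀ = s ≥ 0`, `δ₁ = -r ≤ 0`). -/
lemma SP_kappa {y₀ y₁ z₀ z₁ s r κ : ℝ} (hy₀ : 0 ≤ y₀) (hy₁ : 0 ≤ y₁)
    (hsum : y₀ + y₁ = 1) (hz₀ : 0 ≤ z₀) (hz₁ : 0 ≤ z₁) (hzsum : z₀ + z₁ ≤ 1)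
    (hpos₀ : 0 < y₀ → 0 < z₀) (hpos₁ : 0 < y₁ → 0 < z₁)
    (hs : 0 ≤ s) (hs1 : s ≤ 1) (hr : 0 ≤ r) (hr1 : r ≤ 1)
    (hC : z₀ * s ≤ z₁ * r) (hκ0 : 0 < κ) (hκ1 : κ < 1) :
    y₀ * s - y₁ * r ≤
      2 * ((if 0 < y₀ then y₀ * Real.log (y₀/z₀) else 0)
          + (if 0 < y₁ then y₁ * Real.log (y₁/z₁) else 0)) / (κ * (2 - κ))
        + κ * (y₁ * r) / (1 - κ) := by
  set Dc := (if 0 < y₀ then y₀ * Real.log (y₀/z₀) else 0)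
      + (if 0 < y₁ then y₁ * Real.log (y₁/z₁) else 0) with hDc
  have hκr : κ * r < 1 := lt_of_le_of_lt (by nlinarith) hκ1
  have h1κ : (0:ℝ) < 1 - κ := by linarith
  -- duality at x₀ = κ s, x₁ = -κ r
  have d0 := SP_dual (y := y₀) (z := z₀) (x := κ * s) hy₀ hz₀ hpos₀ (by nlinarith)
  have d1 := SP_dual (y := y₁) (z := z₁) (x := -(κ * r)) hy₁ hz₁ hpos₁ (by nlinarith)
  -- g-bounds
  have g0 : y₀ * (κ*s - Real.log (1 + κ*s)) ≤ y₀ * ((κ*s)^2/2) := by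
    apply mul_le_mul_of_nonneg_left _ hy₀
    exact SP_g_pos (by positivity)
  have g1 : y₁ * (-(κ*r) - Real.log (1 - κ*r)) ≤ y₁ * (κ^2 * r / (2*(1-κ))) := by
    apply mul_le_mul_of_nonneg_left _ hy₁
    have hb := SP_g_neg (t := κ*r) (by positivity) hκr
    have : (κ*r)^2/(2*(1-κ*r)) ≤ κ^2*r/(2*(1-κ)) := by
      rw [div_le_div_iff₀ (by nlinarith) (by nlinarith)]
      nlinarith [mul_nonneg (mul_nonneg (le_of_lt hκ0) (le_of_lt hκ0)) hr,
        mul_nonneg hr (sub_nonneg.2 hr1)]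
    linarith
  have hlog1 : Real.log (1 + -(κ*r)) = Real.log (1 - κ*r) := by ring_nf
  -- combine the duality inequalities
  have hsum1 : (y₀ - z₀) * (κ*s) + (y₁ - z₁) * (-(κ*r)) ≤
      Dc + y₀ * ((κ*s)^2/2) + y₁ * (κ^2 * r / (2*(1-κ))) := by
    have := add_le_add d0 d1
    rw [hlog1] at this
    linarith [g0, g1, this]
  -- use the constraint: κ(y₀ s - y₁ r) ≤ LHS above
  have hcons : κ * (y₀ * s - y₁ * r) ≤ (y₀ - z₀) * (κ*s) + (y₁ - z₁) * (-(κ*r)) := by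
    have := mul_le_mul_of_nonneg_left hC (le_of_lt hκ0)
    nlinarith [this]
  -- s^2 ≤ s
  have hss : y₀ * ((κ*s)^2/2) ≤ κ^2 * (y₀ * s)/2 := by
    have : s^2 ≤ s := by nlinarith
    nlinarith [mul_nonneg hy₀ (sub_nonneg.2 this), sq_nonneg κ]
  set A := y₀ * s - y₁ * r with hA
  have hy0s : y₀ * s = A + y₁ * r := by rw [hA]; ring
  have main : κ * A ≤ Dc + κ^2 * (A + y₁*r)/2 + y₁ * (κ^2 * r/(2*(1-κ))) := by
    calc κ * A ≤ (y₀ - z₀) * (κ*s) + (y₁ - z₁) * (-(κ*r)) := hcons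
    _ ≤ Dc + y₀ * ((κ*s)^2/2) + y₁ * (κ^2 * r / (2*(1-κ))) := hsum1
    _ ≤ Dc + κ^2 * (A + y₁*r)/2 + y₁ * (κ^2 * r/(2*(1-κ))) := by
        rw [← hy0s]; linarith [hss]
  -- rearrange to the final form
  have hκ2 : (0:ℝ) < κ * (2 - κ) := by nlinarith
  have key2 : A * (κ*(2-κ)) * (1-κ) ≤ 2*Dc*(1-κ) + κ^2*(y₁*r)*(2-κ) := by
    set B := y₁ * (κ^2*r/(2*(1-κ))) with hB
    have halg : B * (2*(1-κ)) = κ^2*(y₁*r) := by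
      rw [hB]; field_simp
    have m2 := mul_le_mul_of_nonneg_right main (by linarith : (0:ℝ) ≤ 2*(1-κ))
    have e1 : (Dc + κ^2*(A+y₁*r)/2 + B)*(2*(1-κ))
        = 2*Dc*(1-κ) + κ^2*(A+y₁*r)*(1-κ) + B*(2*(1-κ)) := by ring
    rw [e1, halg] at m2
    nlinarith [m2]
  have hrw : 2*Dc/(κ*(2-κ)) + κ*(y₁*r)/(1-κ)
      = (2*Dc*(1-κ) + κ^2*(y₁*r)*(2-κ))/((κ*(2-κ))*(1-κ)) := by
    rw [div_add_div _ _ (ne_of_gt hκ2) (ne_of_gt h1κ)]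
    ring
  rw [hrw, le_div_iff₀ (by positivity)]
  nlinarith [key2]

end Dual

/-- Optimising the κ-family. -/
lemma SP_combine {A dd M : ℝ} (hd : 0 ≤ dd) (hM : 0 ≤ M)
    (h : ∀ κ : ℝ, 0 < κ → κ < 1 → A ≤ 2*dd/(κ*(2-κ)) + κ*M/(1-κ)) :
    A ≤ 2*dd + 2*Real.sqrt (M*dd) := by
  rcases eq_or_lt_of_le hd with hd0 | hd0
  · -- d = 0 : show A ≤ 0
    have hA0 : A ≤ 0 := by
      by_contra hA
      push_neg at hA
      have hMA : 0 < M + A := by linarith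
      set κ := A/(2*(M+A)) with hκ
      have hκ0 : 0 < κ := by positivity
      have hκ1 : κ < 1 := by
        rw [hκ, div_lt_one (by positivity)]; linarith
      have := h κ hκ0 hκ1
      rw [← hd0] at this
      simp at this
      -- this : A ≤ κ*M/(1-κ)
      have h1κ : (0:ℝ) < 1 - κ := by linarith
      rw [le_div_iff₀ h1κ] at this
      -- A*(1-κ) ≤ κ*M ; κ = A/(2(M+A))
      have hexp : κ*(2*(M+A)) = A := by rw [hκ]; field_simp
      nlinarith [this, hexp, hA, hM]
    have : 0 ≤ 2*dd + 2*Real.sqrt (M*dd) := by positivity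
    linarith
  · rcases eq_or_lt_of_le hM with hM0 | hM0
    · -- M = 0 : show A ≤ 2d
      have hA2 : A ≤ 2*dd := by
        by_contra hA
        push_neg at hA
        have hApos : 0 < A := by linarith
        set θ := 2*dd/A with hθ
        have hθ0 : 0 < θ := by positivity
        have hθ1 : θ < 1 := by rw [hθ, div_lt_one hApos]; linarith
        set κ := (θ+1)/2 with hκ
        have hκ0 : 0 < κ := by positivity
        have hκ1 : κ < 1 := by rw [hκ]; linarith
        have hh := h κ hκ0 hκ1
        rw [← hM0] at hh
        simp at hh
        -- hh : A ≤ 2*dd/(κ*(2-κ))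
        have hκ2 : (0:ℝ) < κ*(2-κ) := by nlinarith
        rw [le_div_iff₀ hκ2] at hh
        have hθd : θ * A = 2*dd := by rw [hθ]; field_simp
        -- A*(κ(2-κ)) ≤ 2 dd = θ A, and θ < κ(2-κ)
        have hlt : θ < κ*(2-κ) := by rw [hκ]; nlinarith
        nlinarith [hh, hθd, hlt, hApos]
      have : 0 ≤ 2*Real.sqrt (M*dd) := by positivity
      linarith
    · -- d > 0, M > 0 : κ = √d/(√d+√M)
      set u := Real.sqrt dd with hu
      set v := Real.sqrt M with hv
      have hu0 : 0 < u := Real.sqrt_pos.2 hd0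
      have hv0 : 0 < v := Real.sqrt_pos.2 hM0
      have hud : u^2 = dd := Real.sq_sqrt hd
      have hvM : v^2 = M := Real.sq_sqrt hM
      set κ := u/(u+v) with hκ
      have hκ0 : 0 < κ := by positivity
      have hκ1 : κ < 1 := by
        rw [hκ, div_lt_one (by positivity)]; linarith
      have hh := h κ hκ0 hκ1
      have hsqrtMd : Real.sqrt (M*dd) = u*v := by
        have e : M*dd = (u*v)^2 := by rw [← hud, ← hvM]; ring
        rw [e, Real.sqrt_sq (by positivity)]
      rw [hsqrtMd]
      -- compute the two terms
      have h2κ : κ*(2-κ) = u*(u+2*v)/(u+v)^2 := by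
        rw [hκ]; field_simp; ring
      have h1κ : 1-κ = v/(u+v) := by
        rw [hκ]; field_simp; ring
      have t1 : 2*dd/(κ*(2-κ)) = 2*u*(u+v)^2/(u+2*v) := by
        rw [h2κ, ← hud]
        rw [div_div_eq_mul_div]
        field_simp
      have t2 : κ*M/(1-κ) = u*v := by
        rw [h1κ, hκ, ← hvM]
        field_simp
      rw [t1, t2] at hh
      -- final: 2u(u+v)²/(u+2v) + uv ≤ 2u² + 2uv
      have hfin : 2*u*(u+v)^2/(u+2*v) + u*v ≤ 2*u^2 + 2*(u*v) := by
        rw [div_add' _ _ _ (by positivity), div_le_iff₀ (by positivity)]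
        nlinarith [mul_pos (mul_pos hu0 hu0) hv0]
      rw [← hud]
      linarith [hh, hfin]

/-- Main-case per-step bound. -/
lemma SP_main {y₀ y₁ z₀ z₁ s r : ℝ} (hy₀ : 0 ≤ y₀) (hy₁ : 0 ≤ y₁)
    (hsum : y₀ + y₁ = 1) (hz₀ : 0 ≤ z₀) (hz₁ : 0 ≤ z₁) (hzsum : z₀ + z₁ ≤ 1)
    (hpos₀ : 0 < y₀ → 0 < z₀) (hpos₁ : 0 < y₁ → 0 < z₁)
    (hs : 0 ≤ s) (hs1 : s ≤ 1) (hr : 0 ≤ r) (hr1 : r ≤ 1)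
    (hC : z₀ * s ≤ z₁ * r) :
    y₀ * s - y₁ * r ≤
      2 * ((if 0 < y₀ then y₀ * Real.log (y₀/z₀) else 0)
          + (if 0 < y₁ then y₁ * Real.log (y₁/z₁) else 0))
        + 2 * Real.sqrt ((y₁*r) * ((if 0 < y₀ then y₀ * Real.log (y₀/z₀) else 0)
          + (if 0 < y₁ then y₁ * Real.log (y₁/z₁) else 0))) := by
  apply SP_combine (SP_Dc_nonneg hy₀ hy₁ hsum hz₀ hz₁ hzsum hpos₀ hpos₁)
    (by positivity)
  intro κ hκ0 hκ1
  exact SP_kappa hy₀ hy₁ hsum hz₀ hz₁ hzsum hpos₀ hpos₁ hs hs1 hr hr1 hC hκ0 hκ1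

/-- Conditional master inequality: per-step regret bound. -/
lemma SP_cond_master {y₀ y₁ z₀ z₁ p₀ p₁ q₀ q₁ : ℝ} (hy₀ : 0 ≤ y₀) (hy₁ : 0 ≤ y₁)
    (hsum : y₀ + y₁ = 1) (hz₀ : 0 ≤ z₀) (hz₁ : 0 ≤ z₁) (hzsum : z₀ + z₁ ≤ 1)
    (hpos₀ : 0 < y₀ → 0 < z₀) (hpos₁ : 0 < y₁ → 0 < z₁)
    (hp₀ : 0 ≤ p₀) (hp₀1 : p₀ ≤ 1) (hp₁ : 0 ≤ p₁) (hp₁1 : p₁ ≤ 1)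
    (hq₀ : 0 ≤ q₀) (hq₀1 : q₀ ≤ 1) (hq₁ : 0 ≤ q₁) (hq₁1 : q₁ ≤ 1)
    (hC : z₀ * p₀ + z₁ * p₁ ≤ z₀ * q₀ + z₁ * q₁) :
    y₀ * (p₀ - q₀) + y₁ * (p₁ - q₁) ≤
      2 * ((if 0 < y₀ then y₀ * Real.log (y₀/z₀) else 0)
          + (if 0 < y₁ then y₁ * Real.log (y₁/z₁) else 0))
        + 2 * Real.sqrt ((y₀*q₀ + y₁*q₁) * ((if 0 < y₀ then y₀ * Real.log (y₀/z₀) else 0)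
          + (if 0 < y₁ then y₁ * Real.log (y₁/z₁) else 0))) := by
  set Dc := (if 0 < y₀ then y₀ * Real.log (y₀/z₀) else 0)
      + (if 0 < y₁ then y₁ * Real.log (y₁/z₁) else 0) with hDc
  have hDc0 : 0 ≤ Dc := SP_Dc_nonneg hy₀ hy₁ hsum hz₀ hz₁ hzsum hpos₀ hpos₁
  have hm : 0 ≤ y₀*q₀ + y₁*q₁ := by positivity
  rcases le_or_gt (p₀ - q₀) 0 with hδ₀ | hδ₀ <;> rcases le_or_gt (p₁ - q₁) 0 with hδ₁ | hδ₁
  · -- both ≤ 0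
    have : y₀ * (p₀ - q₀) + y₁ * (p₁ - q₁) ≤ 0 := by
      nlinarith [mul_nonneg hy₀ (neg_nonneg.2 hδ₀), mul_nonneg hy₁ (neg_nonneg.2 hδ₁)]
    have h2 : 0 ≤ 2*Real.sqrt ((y₀*q₀ + y₁*q₁) * Dc) := by positivity
    linarith
  · -- δ₀ ≤ 0 < δ₁ : symmetric main case
    have key := SP_main hy₁ hy₀ (by linarith) hz₁ hz₀ (by linarith) hpos₁ hpos₀
      (s := p₁ - q₁) (r := -(p₀ - q₀)) (by linarith) (by linarith) (by linarith) (by linarith)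
      (by nlinarith)
    have hsw : (if 0 < y₁ then y₁ * Real.log (y₁/z₁) else 0)
        + (if 0 < y₀ then y₀ * Real.log (y₀/z₀) else 0) = Dc := by rw [hDc]; ring
    rw [hsw] at key
    have hLHS : y₀ * (p₀ - q₀) + y₁ * (p₁ - q₁) = y₁ * (p₁ - q₁) - y₀ * (-(p₀ - q₀)) := by ring
    rw [hLHS]
    have hmono : Real.sqrt ((y₀ * -(p₀ - q₀)) * Dc) ≤ Real.sqrt ((y₀*q₀ + y₁*q₁) * Dc) := by
      apply Real.sqrt_le_sqrt
      apply mul_le_mul_of_nonneg_right _ hDc0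
      nlinarith [mul_nonneg hy₁ hq₁]
    linarith [key, hmono]
  · -- δ₁ ≤ 0 < δ₀ : main case
    have key := SP_main hy₀ hy₁ hsum hz₀ hz₁ hzsum hpos₀ hpos₁
      (s := p₀ - q₀) (r := -(p₁ - q₁)) (by linarith) (by linarith) (by linarith) (by linarith)
      (by nlinarith)
    rw [← hDc] at key
    have hLHS : y₀ * (p₀ - q₀) + y₁ * (p₁ - q₁) = y₀ * (p₀ - q₀) - y₁ * (-(p₁ - q₁)) := by ring
    rw [hLHS]
    have hmono : Real.sqrt ((y₁ * -(p₁ - q₁)) * Dc) ≤ Real.sqrt ((y₀*q₀ + y₁*q₁) * Dc) := by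
      apply Real.sqrt_le_sqrt
      apply mul_le_mul_of_nonneg_right _ hDc0
      nlinarith [mul_nonneg hy₀ hq₀]
    linarith [key, hmono]
  · -- both > 0 : impossible
    exfalso
    have hz00 : z₀ * (p₀-q₀) ≤ 0 := by nlinarith [mul_nonneg hz₁ hδ₁.le]
    have hz10 : z₁ * (p₁-q₁) ≤ 0 := by nlinarith [mul_nonneg hz₀ hδ₀.le]
    have hy00 : ¬ (0 < y₀) := by
      intro hy
      have := hpos₀ hy
      nlinarith
    have hy10 : ¬ (0 < y₁) := by
      intro hy
      have := hpos₁ hy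
      nlinarith
    push_neg at hy00 hy10
    linarith

section Strings

/-- The finite binary strings of length `k`. -/
def strs : ℕ → Finset (List Bool)
  | 0 => {([] : List Bool)}
  | (k+1) => (strs k).biUnion (fun w => {w ++ [false], w ++ [true]})

lemma strs_length : ∀ {k : ℕ} {x : List Bool}, x ∈ strs k → x.length = k := by
  intro k
  induction k with
  | zero => intro x hx; simp [strs] at hx; simp [hx]
  | succ k ih =>
    intro x hx
    simp only [strs, Finset.mem_biUnion, Finset.mem_insert, Finset.mem_singleton] at hx
    obtain ⟨w, hw, hx⟩ := hx
    rcases hx with h | h <;> subst h <;> simp [ih hw]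

lemma sum_strs_succ (k : ℕ) (f : List Bool → ℝ) :
    ∑ x ∈ strs (k+1), f x = ∑ w ∈ strs k, (f (w ++ [false]) + f (w ++ [true])) := by
  show ∑ x ∈ (strs k).biUnion (fun w => {w ++ [false], w ++ [true]}), f x = _
  rw [Finset.sum_biUnion]
  · apply Finset.sum_congr rfl
    intro w _
    rw [Finset.sum_pair (by simp)]
  · intro w hw w' hw' hne
    apply Finset.disjoint_left.2
    intro x hx hx'
    simp only [Finset.mem_insert, Finset.mem_singleton] at hx hx'
    apply hne
    have hlw := strs_length hw
    have hlw' := strs_length hw'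
    rcases hx with h | h <;> rcases hx' with h' | h' <;>
      · subst h
        have := h'.symm
        have hww : w = w' := by
          have happ := List.append_inj this (by rw [hlw, hlw'])
          exact happ.1.symm
        exact hww

lemma sum_strs_measure {μ : List Bool → ℝ} (hμ : IsMeasure μ) (k : ℕ) :
    ∑ x ∈ strs k, μ x = 1 := by
  induction k with
  | zero => simp [strs, hμ.2.1]
  | succ k ih =>
    rw [sum_strs_succ]
    rw [← ih]
    apply Finset.sum_congr rfl
    intro w _
    exact hμ.2.2 w

lemma card_strs (k : ℕ) : ((strs k).card : ℝ) = 2^k := by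
  induction k with
  | zero => simp [strs]
  | succ k ih =>
    have h1 : ∑ x ∈ strs (k+1), (1:ℝ) = ∑ w ∈ strs k, ((1:ℝ) + 1) := sum_strs_succ k (fun _ => 1)
    simp only [Finset.sum_const, nsmul_eq_mul, mul_one] at h1
    rw [h1, ih]
    ring

lemma sum_ofFn_eq (n : ℕ) (F : List Bool → ℝ) :
    ∑ v : Fin n → Bool, F (List.ofFn v) = ∑ x ∈ strs n, F x := by
  induction n generalizing F with
  | zero =>
    have h0 : ∀ v : Fin 0 → Bool, List.ofFn v = [] := by
      intro v; simp
    simp only [h0]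
    rw [Finset.sum_const, show strs 0 = {([] : List Bool)} from rfl, Finset.sum_singleton]
    simp
  | succ n ih =>
    rw [← Equiv.sum_comp (Fin.insertNthEquiv (fun _ : Fin (n+1) => Bool) (Fin.last n))
      (fun v => F (List.ofFn v))]
    rw [Fintype.sum_prod_type]
    have hthis : ∀ (b : Bool) (u : Fin n → Bool),
        F (List.ofFn ((Fin.insertNthEquiv (fun _ : Fin (n+1) => Bool) (Fin.last n)) (b, u)))
          = F (List.ofFn u ++ [b]) := by
      intro b u
      have he : (Fin.insertNthEquiv (fun _ : Fin (n+1) => Bool) (Fin.last n)) (b, u)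
          = Fin.snoc u b := by
        simp [Fin.insertNthEquiv]
      rw [he, List.ofFn_succ']
      simp [List.concat_eq_append]
    simp only [hthis]
    rw [Fintype.sum_bool]
    rw [ih (fun x => F (x ++ [true])), ih (fun x => F (x ++ [false]))]
    rw [sum_strs_succ n F, ← Finset.sum_add_distrib]
    apply Finset.sum_congr rfl
    intro w _
    ring

lemma sum_take_eq {μ : List Bool → ℝ} (hμ : IsMeasure μ) (m k : ℕ) (H : List Bool → ℝ) :
    ∑ x ∈ strs (k+m), μ x * H (x.take k) = ∑ w ∈ strs k, μ w * H w := by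
  induction m with
  | zero =>
    apply Finset.sum_congr rfl
    intro w hw
    rw [List.take_of_length_le (by rw [strs_length hw]; omega)]
  | succ m ih =>
    rw [show k + (m+1) = (k+m)+1 by ring, sum_strs_succ]
    rw [← ih]
    apply Finset.sum_congr rfl
    intro x hx
    have hlen : k ≤ x.length := by rw [strs_length hx]; omega
    rw [List.take_append_of_le_length hlen, List.take_append_of_le_length hlen]
    rw [← add_mul, hμ.2.2 x]

/-- Per-step expected loss. -/
noncomputable def stepL (ℓ : ℕ → Bool → Bool → ℝ) (μ : List Bool → ℝ)
    (Λ : List Bool → Bool) (t : ℕ) : ℝ :=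
  ∑ w ∈ strs t, (μ (w ++ [false]) * ℓ (t+1) false (Λ w) + μ (w ++ [true]) * ℓ (t+1) true (Λ w))

lemma loss_decomp {n : ℕ} {ℓ : ℕ → Bool → Bool → ℝ} {μ : List Bool → ℝ}
    (hμ : IsMeasure μ) (Λ : List Bool → Bool) :
    Loss n ℓ μ Λ = ∑ t ∈ Finset.range n, stepL ℓ μ Λ t := by
  unfold Loss
  simp_rw [Finset.mul_sum]
  rw [Finset.sum_comm]
  rw [← Fin.sum_univ_eq_sum_range (fun t => stepL ℓ μ Λ t) n]
  apply Finset.sum_congr rfl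
  intro t _
  -- fix t : Fin n
  set Hl : List Bool → ℝ := fun w => ℓ ((t:ℕ)+1) (w.getLastD false) (Λ w.dropLast) with hHl
  have step1 : ∀ v : Fin n → Bool,
      μ (List.ofFn v) * ℓ ((t:ℕ)+1) (v t) (Λ ((List.ofFn v).take (t:ℕ)))
        = μ (List.ofFn v) * Hl ((List.ofFn v).take ((t:ℕ)+1)) := by
    intro v
    have htlen : (t:ℕ) < (List.ofFn v).length := by simp [t.isLt]
    have htake : (List.ofFn v).take ((t:ℕ)+1) = (List.ofFn v).take (t:ℕ) ++ [v t] := by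
      rw [List.take_succ]
      congr
      rw [List.getElem?_eq_getElem htlen]
      simp
    rw [htake, hHl]
    simp only [List.getLastD_concat, List.dropLast_concat]
  simp_rw [step1]
  have hsplit : n = ((t:ℕ)+1) + (n - ((t:ℕ)+1)) := by omega
  rw [sum_ofFn_eq n (fun x => μ x * Hl (x.take ((t:ℕ)+1)))]
  rw [show (strs n) = strs (((t:ℕ)+1) + (n - ((t:ℕ)+1))) by rw [← hsplit]]
  rw [sum_take_eq hμ (n - ((t:ℕ)+1)) ((t:ℕ)+1) Hl]
  rw [sum_strs_succ]
  unfold stepL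
  apply Finset.sum_congr rfl
  intro w _
  rw [hHl]
  simp

end Strings

section Divergence

/-- Pointwise divergence contribution. -/
noncomputable def phiD (μ S : List Bool → ℝ) (x : List Bool) : ℝ :=
  if 0 < μ x then μ x * Real.log (μ x / S x) else 0

/-- Local (one-step) divergence at a node. -/
noncomputable def DW (μ S : List Bool → ℝ) (w : List Bool) : ℝ :=
  phiD μ S (w ++ [false]) + phiD μ S (w ++ [true]) - phiD μ S w

lemma DW_telescope (μ S : List Bool → ℝ) (n : ℕ) :
    ∑ t ∈ Finset.range n, ∑ w ∈ strs t, DW μ S w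
      = ∑ x ∈ strs n, phiD μ S x - phiD μ S [] := by
  have hstep : ∀ t, ∑ w ∈ strs t, DW μ S w
      = (∑ x ∈ strs (t+1), phiD μ S x) - ∑ x ∈ strs t, phiD μ S x := by
    intro t
    rw [sum_strs_succ t (phiD μ S)]
    unfold DW
    rw [← Finset.sum_sub_distrib]
  calc ∑ t ∈ Finset.range n, ∑ w ∈ strs t, DW μ S w
      = ∑ t ∈ Finset.range n,
          ((∑ x ∈ strs (t+1), phiD μ S x) - ∑ x ∈ strs t, phiD μ S x) := by
        exact Finset.sum_congr rfl (fun t _ => hstep t)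
    _ = (∑ x ∈ strs n, phiD μ S x) - ∑ x ∈ strs 0, phiD μ S x :=
        Finset.sum_range_sub (fun k => ∑ x ∈ strs k, phiD μ S x) n
    _ = ∑ x ∈ strs n, phiD μ S x - phiD μ S [] := by
        rw [show strs 0 = {([] : List Bool)} from rfl, Finset.sum_singleton]

/-- Entropy bound: `∑ μ(x)(-log μ(x)) ≤ n log 2` over strings of length `n`. -/
lemma entropy_bound {μ : List Bool → ℝ} (hμ : IsMeasure μ) (n : ℕ) :
    ∑ x ∈ strs n, μ x * (-Real.log (μ x)) ≤ n * Real.log 2 := by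
  have hterm : ∀ x ∈ strs n, μ x * (-Real.log (μ x))
      ≤ ((2:ℝ)^n)⁻¹ + μ x * (n * Real.log 2 - 1) := by
    intro x _
    rcases eq_or_lt_of_le (hμ.1 x) with h0 | h0
    · rw [← h0]
      simp
    · have h2n : (0:ℝ) < 2^n := by positivity
      have ht : (0:ℝ) < 1/(μ x * 2^n) := by positivity
      have hlog := Real.log_le_sub_one_of_pos ht
      rw [show (1:ℝ)/(μ x * 2^n) = (μ x * 2^n)⁻¹ from one_div _, Real.log_inv] at hlog
      rw [Real.log_mul (ne_of_gt h0) (ne_of_gt h2n)] at hlog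
      rw [Real.log_pow] at hlog
      -- hlog : -(log μx + n log 2) ≤ (μx 2^n)⁻¹ - 1
      have := mul_le_mul_of_nonneg_left hlog (le_of_lt h0)
      have hinv : μ x * (μ x * 2^n)⁻¹ = ((2:ℝ)^n)⁻¹ := by
        field_simp
      nlinarith [this, hinv]
  calc ∑ x ∈ strs n, μ x * (-Real.log (μ x))
      ≤ ∑ x ∈ strs n, (((2:ℝ)^n)⁻¹ + μ x * (n * Real.log 2 - 1)) :=
        Finset.sum_le_sum hterm
    _ = (strs n).card * ((2:ℝ)^n)⁻¹ + (∑ x ∈ strs n, μ x) * (n * Real.log 2 - 1) := by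
        rw [Finset.sum_add_distrib, Finset.sum_const, nsmul_eq_mul, ← Finset.sum_mul]
    _ = n * Real.log 2 := by
        rw [card_strs, sum_strs_measure hμ]
        field_simp
        ring

end Divergence

section PhiBound

lemma mu_le_one {μ : List Bool → ℝ} (hμ : IsMeasure μ) {n : ℕ} {x : List Bool}
    (hx : x ∈ strs n) : μ x ≤ 1 := by
  have h := Finset.single_le_sum (f := μ) (fun i _ => hμ.1 i) hx
  rw [sum_strs_measure hμ n] at h
  exact h

lemma PhiN_le {μ S : List Bool → ℝ} (hμ : IsMeasure μ) (n : ℕ)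
    {c a b d : ℝ} (hc : 0 < c) (ha : 1 ≤ a) (hb : 0 ≤ b) (hd : 1 ≤ d)
    (hSpos : ∀ x : List Bool, x.length ≤ n → 0 < μ x → 0 < S x)
    (hdom : ∀ x : List Bool, x.length = n → 0 < μ x →
      c * μ x / (a + b * (-Real.logb 2 (μ x))) ^ d ≤ S x) :
    ∑ x ∈ strs n, phiD μ S x ≤ d * Real.log (a + b * n) - Real.log c := by
  set K : ℝ := a + b * n with hK
  have hK1 : 1 ≤ K := by
    rw [hK]
    have : 0 ≤ b * n := by positivity
    linarith
  have hK0 : (0:ℝ) < K := by linarith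
  set G : List Bool → ℝ := fun x => a + b * (-Real.logb 2 (μ x)) with hG
  have hG1 : ∀ x ∈ strs n, 1 ≤ G x := by
    intro x hx
    have hlogb : Real.logb 2 (μ x) ≤ 0 :=
      Real.logb_nonpos one_lt_two (hμ.1 x) (mu_le_one hμ hx)
    have : 0 ≤ b * (-Real.logb 2 (μ x)) := by
      apply mul_nonneg hb; linarith
    rw [hG]; simp only; linarith
  -- step 1 : pointwise bound on phiD
  have step1 : ∀ x ∈ strs n, phiD μ S x ≤ d * (μ x * Real.log (G x)) - μ x * Real.log c := by
    intro x hx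
    rcases eq_or_lt_of_le (hμ.1 x) with h0 | h0
    · unfold phiD
      rw [if_neg (by rw [← h0]; exact lt_irrefl 0), ← h0]
      simp
    · have hSx : 0 < S x := hSpos x (le_of_eq (strs_length hx)) h0
      have hdomx := hdom x (strs_length hx) h0
      have hGx : (0:ℝ) < G x := by linarith [hG1 x hx]
      have hGd : (0:ℝ) < (G x) ^ d := Real.rpow_pos_of_pos hGx d
      have hratio : μ x / S x ≤ (G x) ^ d / c := by
        rw [div_le_div_iff₀ hSx hc]
        rw [div_le_iff₀ hGd] at hdomx
        nlinarith [hdomx]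
      have hlog : Real.log (μ x / S x) ≤ d * Real.log (G x) - Real.log c := by
        have h1 := Real.log_le_log (by positivity) hratio
        rw [Real.log_div (ne_of_gt hGd) (ne_of_gt hc), Real.log_rpow hGx] at h1
        linarith
      unfold phiD
      rw [if_pos h0]
      have := mul_le_mul_of_nonneg_left hlog (le_of_lt h0)
      nlinarith [this]
  -- step 2 : ∑ μ log G ≤ log K
  have hent : ∑ x ∈ strs n, μ x * (-Real.logb 2 (μ x)) ≤ n := by
    have h2 : (0:ℝ) < Real.log 2 := Real.log_pos one_lt_two
    have := entropy_bound hμ n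
    have heq : ∀ x, μ x * (-Real.logb 2 (μ x)) = (μ x * (-Real.log (μ x))) / Real.log 2 := by
      intro x
      rw [Real.logb]
      field_simp
    simp_rw [heq]
    rw [← Finset.sum_div]
    rw [div_le_iff₀ h2]
    linarith
  have hsumG : ∑ x ∈ strs n, μ x * G x ≤ K := by
    have : ∀ x, μ x * G x = a * μ x + b * (μ x * (-Real.logb 2 (μ x))) := by
      intro x; rw [hG]; ring
    simp_rw [this]
    rw [Finset.sum_add_distrib, ← Finset.mul_sum, ← Finset.mul_sum, sum_strs_measure hμ n]
    rw [hK]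
    have := mul_le_mul_of_nonneg_left hent hb
    linarith
  have step2 : ∑ x ∈ strs n, μ x * Real.log (G x) ≤ Real.log K := by
    have hterm : ∀ x ∈ strs n, μ x * Real.log (G x)
        ≤ (μ x * G x) / K + μ x * (Real.log K - 1) := by
      intro x hx
      have hGx : (0:ℝ) < G x := by linarith [hG1 x hx]
      have ht : (0:ℝ) < G x / K := by positivity
      have hlog := Real.log_le_sub_one_of_pos ht
      rw [Real.log_div (ne_of_gt hGx) (ne_of_gt hK0)] at hlog
      -- log G - log K ≤ G/K - 1
      have := mul_le_mul_of_nonneg_left hlog (hμ.1 x)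
      have hexp : μ x * (G x / K) = (μ x * G x)/K := by ring
      nlinarith [this]
    calc ∑ x ∈ strs n, μ x * Real.log (G x)
        ≤ ∑ x ∈ strs n, ((μ x * G x) / K + μ x * (Real.log K - 1)) :=
          Finset.sum_le_sum hterm
      _ = (∑ x ∈ strs n, μ x * G x)/K + (∑ x ∈ strs n, μ x) * (Real.log K - 1) := by
          rw [Finset.sum_add_distrib, ← Finset.sum_div, ← Finset.sum_mul]
      _ ≤ K/K + 1 * (Real.log K - 1) := by
          have h1 : (∑ x ∈ strs n, μ x * G x)/K ≤ K/K := by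
            gcongr
          rw [sum_strs_measure hμ n]
          linarith [h1]
      _ ≤ Real.log K := by
          rw [div_self (ne_of_gt hK0)]
          linarith
  calc ∑ x ∈ strs n, phiD μ S x
      ≤ ∑ x ∈ strs n, (d * (μ x * Real.log (G x)) - μ x * Real.log c) :=
        Finset.sum_le_sum step1
    _ = d * (∑ x ∈ strs n, μ x * Real.log (G x)) - (∑ x ∈ strs n, μ x) * Real.log c := by
        rw [Finset.sum_sub_distrib, ← Finset.mul_sum, ← Finset.sum_mul]
    _ ≤ d * Real.log K - 1 * Real.log c := by
        rw [sum_strs_measure hμ n]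
        have := mul_le_mul_of_nonneg_left step2 (by linarith : (0:ℝ) ≤ d)
        linarith
    _ = d * Real.log (a + b*n) - Real.log c := by rw [hK]; ring

end PhiBound

section StepKey

/-- Decomposition of the local divergence at a positive-measure node. -/
lemma DW_eq {μ S : List Bool → ℝ} (hμ : IsMeasure μ) {n t : ℕ} (ht : t < n)
    (hSpos : ∀ x : List Bool, x.length ≤ n → 0 < μ x → 0 < S x)
    {w : List Bool} (hw : w ∈ strs t) (hμw : 0 < μ w) :
    DW μ S w = μ w *
      ((if 0 < μ (w ++ [false]) / μ w then
          (μ (w ++ [false])/μ w) * Real.log ((μ (w ++ [false])/μ w)/(S (w ++ [false])/S w)) else 0)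
        + (if 0 < μ (w ++ [true]) / μ w then
          (μ (w ++ [true])/μ w) * Real.log ((μ (w ++ [true])/μ w)/(S (w ++ [true])/S w)) else 0)) := by
  have hlw : w.length = t := strs_length hw
  have hSw : 0 < S w := hSpos w (by omega) hμw
  have key_b : ∀ u : List Bool, 0 ≤ μ u → (0 < μ u → 0 < S u) →
      phiD μ S u - μ u * Real.log (μ w / S w)
        = μ w * (if 0 < μ u / μ w then (μ u/μ w) * Real.log ((μ u/μ w)/(S u/S w)) else 0) := by
    intro u hu hupos
    rcases eq_or_lt_of_le hu with h0 | h0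
    · have hμu : μ u = 0 := h0.symm
      simp [phiD, hμu]
    · have hSu : 0 < S u := hupos h0
      rw [if_pos (div_pos h0 hμw)]
      unfold phiD
      rw [if_pos h0]
      have hrw : (μ u/μ w)/(S u/S w) = (μ u/S u)/(μ w/S w) := by
        field_simp
      rw [hrw, Real.log_div (ne_of_gt (div_pos h0 hSu)) (ne_of_gt (div_pos hμw hSw))]
      have hc : μ w * (μ u / μ w * (Real.log (μ u/S u) - Real.log (μ w/S w)))
          = μ u * (Real.log (μ u/S u) - Real.log (μ w/S w)) := by
        field_simp
      rw [hc]
      ring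
  have hb0 := key_b (w ++ [false]) (hμ.1 _) (fun h => hSpos _ (by simp [hlw]; omega) h)
  have hb1 := key_b (w ++ [true]) (hμ.1 _) (fun h => hSpos _ (by simp [hlw]; omega) h)
  have hphiw : phiD μ S w = (μ (w ++ [false]) + μ (w ++ [true])) * Real.log (μ w / S w) := by
    unfold phiD
    rw [if_pos hμw, hμ.2.2 w]
  unfold DW
  rw [hphiw]
  nlinarith [hb0, hb1]

/-- The local divergence is nonnegative. -/
lemma DW_nonneg {μ S : List Bool → ℝ} (hμ : IsMeasure μ) (hS : IsSemimeasure S)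
    {n t : ℕ} (ht : t < n)
    (hSpos : ∀ x : List Bool, x.length ≤ n → 0 < μ x → 0 < S x)
    {w : List Bool} (hw : w ∈ strs t) : 0 ≤ DW μ S w := by
  have hlw : w.length = t := strs_length hw
  rcases eq_or_lt_of_le (hμ.1 w) with h0 | hμw
  · have hch := hμ.2.2 w
    have h00 : μ (w ++ [false]) = 0 :=
      le_antisymm (by nlinarith [hμ.1 (w ++ [false]), hμ.1 (w ++ [true])]) (hμ.1 _)
    have h01 : μ (w ++ [true]) = 0 :=
      le_antisymm (by nlinarith [hμ.1 (w ++ [false]), hμ.1 (w ++ [true])]) (hμ.1 _)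
    unfold DW phiD
    rw [if_neg (by rw [h00]; exact lt_irrefl 0), if_neg (by rw [h01]; exact lt_irrefl 0),
      if_neg (by rw [← h0]; exact lt_irrefl 0)]
    simp
  · have hSw : 0 < S w := hSpos w (by omega) hμw
    rw [DW_eq hμ ht hSpos hw hμw]
    apply mul_nonneg hμw.le
    apply SP_Dc_nonneg (y₀ := μ (w ++ [false])/μ w) (y₁ := μ (w ++ [true])/μ w)
      (z₀ := S (w ++ [false])/S w) (z₁ := S (w ++ [true])/S w)
    · exact div_nonneg (hμ.1 _) hμw.le
    · exact div_nonneg (hμ.1 _) hμw.le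
    · rw [← add_div, hμ.2.2 w, div_self (ne_of_gt hμw)]
    · exact div_nonneg (hS.1 _) hSw.le
    · exact div_nonneg (hS.1 _) hSw.le
    · rw [← add_div, div_le_one hSw]
      exact hS.2.2 w
    · intro h
      have : 0 < μ (w ++ [false]) := by
        rcases div_pos_iff.1 h with ⟨h1, _⟩ | ⟨_, h2⟩
        · exact h1
        · linarith
      exact div_pos (hSpos _ (by simp [hlw]; omega) this) hSw
    · intro h
      have : 0 < μ (w ++ [true]) := by
        rcases div_pos_iff.1 h with ⟨h1, _⟩ | ⟨_, h2⟩
        · exact h1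
        · linarith
      exact div_pos (hSpos _ (by simp [hlw]; omega) this) hSw

/-- Per-step key inequality. -/
lemma step_key {n : ℕ} {ℓ : ℕ → Bool → Bool → ℝ} {μ S : List Bool → ℝ}
    (hμ : IsMeasure μ) (hS : IsSemimeasure S)
    (hℓ : ∀ t y b, 0 ≤ ℓ t y b ∧ ℓ t y b ≤ 1)
    (hSpos : ∀ x : List Bool, x.length ≤ n → 0 < μ x → 0 < S x)
    {Λμ ΛS : List Bool → Bool} (hΛS : IsPredictor n ℓ S ΛS)
    {t : ℕ} (ht : t < n) {w : List Bool} (hw : w ∈ strs t) :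
    (μ (w ++ [false]) * ℓ (t+1) false (ΛS w) + μ (w ++ [true]) * ℓ (t+1) true (ΛS w))
      - (μ (w ++ [false]) * ℓ (t+1) false (Λμ w) + μ (w ++ [true]) * ℓ (t+1) true (Λμ w))
    ≤ 2 * DW μ S w + 2 * Real.sqrt
        ((μ (w ++ [false]) * ℓ (t+1) false (Λμ w) + μ (w ++ [true]) * ℓ (t+1) true (Λμ w))
          * DW μ S w) := by
  have hlw : w.length = t := strs_length hw
  rcases eq_or_lt_of_le (hμ.1 w) with h0 | hμw
  · have hch := hμ.2.2 w
    have h00 : μ (w ++ [false]) = 0 :=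
      le_antisymm (by nlinarith [hμ.1 (w ++ [false]), hμ.1 (w ++ [true])]) (hμ.1 _)
    have h01 : μ (w ++ [true]) = 0 :=
      le_antisymm (by nlinarith [hμ.1 (w ++ [false]), hμ.1 (w ++ [true])]) (hμ.1 _)
    have hDW : 0 ≤ DW μ S w := DW_nonneg hμ hS ht hSpos hw
    rw [h00, h01]
    simp
    positivity
  · have hSw : 0 < S w := hSpos w (by omega) hμw
    set y₀ := μ (w ++ [false])/μ w with hy₀d
    set y₁ := μ (w ++ [true])/μ w with hy₁d
    set z₀ := S (w ++ [false])/S w with hz₀d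
    set z₁ := S (w ++ [true])/S w with hz₁d
    set p₀ := ℓ (t+1) false (ΛS w) with hp₀d
    set p₁ := ℓ (t+1) true (ΛS w) with hp₁d
    set q₀ := ℓ (t+1) false (Λμ w) with hq₀d
    set q₁ := ℓ (t+1) true (Λμ w) with hq₁d
    have hC : z₀ * p₀ + z₁ * p₁ ≤ z₀ * q₀ + z₁ * q₁ := by
      have hpred := hΛS w (by omega) hSw (Λμ w)
      rw [hlw] at hpred
      rw [hz₀d, hz₁d, hp₀d, hp₁d, hq₀d, hq₁d]
      calc S (w ++ [false])/S w * ℓ (t+1) false (ΛS w) + S (w ++ [true])/S w * ℓ (t+1) true (ΛS w)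
          ≤ S (w ++ [false])/S w * ℓ (t+1) false (Λμ w) + S (w ++ [true])/S w * ℓ (t+1) true (Λμ w) := hpred
        _ = _ := by ring
    have key := SP_cond_master (y₀ := y₀) (y₁ := y₁) (z₀ := z₀) (z₁ := z₁)
      (p₀ := p₀) (p₁ := p₁) (q₀ := q₀) (q₁ := q₁)
      (div_nonneg (hμ.1 _) hμw.le) (div_nonneg (hμ.1 _) hμw.le)
      (by rw [hy₀d, hy₁d, ← add_div, hμ.2.2 w, div_self (ne_of_gt hμw)])
      (div_nonneg (hS.1 _) hSw.le) (div_nonneg (hS.1 _) hSw.le)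
      (by rw [hz₀d, hz₁d, ← add_div, div_le_one hSw]; exact hS.2.2 w)
      (by
        intro h
        have h2 : 0 < μ (w ++ [false]) := by
          rcases div_pos_iff.1 h with ⟨h1, _⟩ | ⟨_, h2⟩
          · exact h1
          · linarith
        exact div_pos (hSpos _ (by simp [hlw]; omega) h2) hSw)
      (by
        intro h
        have h2 : 0 < μ (w ++ [true]) := by
          rcases div_pos_iff.1 h with ⟨h1, _⟩ | ⟨_, h2⟩
          · exact h1
          · linarith
        exact div_pos (hSpos _ (by simp [hlw]; omega) h2) hSw)
      (hℓ _ _ _).1 (hℓ _ _ _).2 (hℓ _ _ _).1 (hℓ _ _ _).2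
      (hℓ _ _ _).1 (hℓ _ _ _).2 (hℓ _ _ _).1 (hℓ _ _ _).2
      hC
    -- multiply by μ w
    have hmul := mul_le_mul_of_nonneg_left key hμw.le
    have hDWeq : DW μ S w = μ w * ((if 0 < y₀ then y₀ * Real.log (y₀/z₀) else 0)
        + (if 0 < y₁ then y₁ * Real.log (y₁/z₁) else 0)) :=
      DW_eq hμ ht hSpos hw hμw
    have hyy₀ : μ w * y₀ = μ (w ++ [false]) := mul_div_cancel₀ _ (ne_of_gt hμw)
    have hyy₁ : μ w * y₁ = μ (w ++ [true]) := mul_div_cancel₀ _ (ne_of_gt hμw)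
    set Dc := (if 0 < y₀ then y₀ * Real.log (y₀/z₀) else 0)
        + (if 0 < y₁ then y₁ * Real.log (y₁/z₁) else 0) with hDcd
    have hsqrt : μ w * Real.sqrt ((y₀*q₀ + y₁*q₁) * Dc)
        = Real.sqrt ((μ (w ++ [false]) * q₀ + μ (w ++ [true]) * q₁) * DW μ S w) := by
      rw [show (μ (w ++ [false]) * q₀ + μ (w ++ [true]) * q₁) * DW μ S w
          = (μ w)^2 * ((y₀*q₀ + y₁*q₁) * Dc) by
        rw [hDWeq, ← hyy₀, ← hyy₁]; ring]
      rw [Real.sqrt_mul (sq_nonneg _), Real.sqrt_sq hμw.le]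
    have hLHS : μ w * (y₀ * (p₀ - q₀) + y₁ * (p₁ - q₁))
        = (μ (w ++ [false]) * p₀ + μ (w ++ [true]) * p₁)
          - (μ (w ++ [false]) * q₀ + μ (w ++ [true]) * q₁) := by
      rw [← hyy₀, ← hyy₁]; ring
    have hRHS : μ w * (2 * Dc + 2 * Real.sqrt ((y₀*q₀ + y₁*q₁) * Dc))
        = 2 * DW μ S w + 2 * Real.sqrt
          ((μ (w ++ [false]) * q₀ + μ (w ++ [true]) * q₁) * DW μ S w) := by
      rw [mul_add, ← hsqrt, hDWeq]
      ring
    rw [hLHS, hRHS] at hmul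
    exact hmul

end StepKey

set_option maxHeartbeats 1000000 in
/-- Theorem 1 of the paper (loss bound for speed-prior-based prediction), stated
abstractly: if the semimeasure `S` dominates the measure `μ` on strings of
length `n` in the sense `S(x) ≥ c·μ(x)/(a + b·(−log₂ μ(x)))^d`, then any
`S`-predictor `Λ_S` satisfies
`L^{Λ_S}_{nμ} − L^{Λ_μ}_{nμ} ≤ 2·D_n + 2·√(L^{Λ_μ}_{nμ}·D_n)` with
`D_n = d·ln(a + b·n) − ln c`, for any `μ`-predictor `Λ_μ`. -/
theorem stmt_7 (n : ℕ) (μ S : List Bool → ℝ) (ℓ : ℕ → Bool → Bool → ℝ)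
    (c a b d : ℝ) (Λμ ΛS : List Bool → Bool)
    (hμ : IsMeasure μ) (hS : IsSemimeasure S)
    (hℓ : ∀ t y b, 0 ≤ ℓ t y b ∧ ℓ t y b ≤ 1)
    (hSpos : ∀ x : List Bool, x.length ≤ n → 0 < μ x → 0 < S x)
    (hc : 0 < c) (ha : 1 ≤ a) (hb : 0 ≤ b) (hd : 1 ≤ d)
    (hdom : ∀ x : List Bool, x.length = n → 0 < μ x →
      c * μ x / (a + b * (-Real.logb 2 (μ x))) ^ d ≤ S x)
    (hΛμ : IsPredictor n ℓ μ Λμ) (hΛS : IsPredictor n ℓ S ΛS) :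
    Loss n ℓ μ ΛS - Loss n ℓ μ Λμ ≤
      2 * (d * Real.log (a + b * n) - Real.log c) +
        2 * Real.sqrt (Loss n ℓ μ Λμ * (d * Real.log (a + b * n) - Real.log c)) := by
  classical
  set Df : ℝ := d * Real.log (a + b * n) - Real.log c with hDfd
  set Qf : ℕ → List Bool → ℝ := fun t w =>
    μ (w ++ [false]) * ℓ (t+1) false (Λμ w) + μ (w ++ [true]) * ℓ (t+1) true (Λμ w) with hQf
  set Pf : ℕ → List Bool → ℝ := fun t w =>
    μ (w ++ [false]) * ℓ (t+1) false (ΛS w) + μ (w ++ [true]) * ℓ (t+1) true (ΛS w) with hPf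
  have hQ0 : ∀ t w, 0 ≤ Qf t w := by
    intro t w
    apply add_nonneg <;> exact mul_nonneg (hμ.1 _) (hℓ _ _ _).1
  have hLμ_eq : Loss n ℓ μ Λμ = ∑ t ∈ Finset.range n, ∑ w ∈ strs t, Qf t w := by
    rw [loss_decomp hμ Λμ]
    rfl
  have hLS_eq : Loss n ℓ μ ΛS = ∑ t ∈ Finset.range n, ∑ w ∈ strs t, Pf t w := by
    rw [loss_decomp hμ ΛS]
    rfl
  set DN : ℝ := ∑ t ∈ Finset.range n, ∑ w ∈ strs t, DW μ S w with hDNd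
  have hDW0 : ∀ t ∈ Finset.range n, ∀ w ∈ strs t, 0 ≤ DW μ S w := by
    intro t ht w hw
    exact DW_nonneg hμ hS (Finset.mem_range.1 ht) hSpos hw
  have hDN0 : 0 ≤ DN := by
    apply Finset.sum_nonneg
    intro t ht
    exact Finset.sum_nonneg (fun w hw => hDW0 t ht w hw)
  have hDN_le : DN ≤ Df := by
    rw [hDNd, DW_telescope μ S n]
    have hS0 : 0 < S [] := hSpos [] (by simp) (by rw [hμ.2.1]; norm_num)
    have hphi0 : 0 ≤ phiD μ S [] := by
      unfold phiD
      rw [if_pos (by rw [hμ.2.1]; norm_num), hμ.2.1]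
      have : Real.log (S []) ≤ 0 := Real.log_nonpos hS0.le hS.2.1
      rw [Real.log_div one_ne_zero (ne_of_gt hS0), Real.log_one]
      linarith
    have := PhiN_le hμ n hc ha hb hd hSpos hdom
    rw [hDfd]
    linarith
  have hLμ0 : 0 ≤ Loss n ℓ μ Λμ := by
    rw [hLμ_eq]
    apply Finset.sum_nonneg
    intro t _
    exact Finset.sum_nonneg (fun w _ => hQ0 t w)
  -- main per-step bound
  have hmain : Loss n ℓ μ ΛS - Loss n ℓ μ Λμ ≤
      2 * DN + 2 * ∑ t ∈ Finset.range n, ∑ w ∈ strs t, Real.sqrt (Qf t w * DW μ S w) := by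
    rw [hLS_eq, hLμ_eq, ← Finset.sum_sub_distrib]
    have h1 : ∀ t ∈ Finset.range n,
        (∑ w ∈ strs t, Pf t w) - (∑ w ∈ strs t, Qf t w)
          ≤ ∑ w ∈ strs t, (2 * DW μ S w + 2 * Real.sqrt (Qf t w * DW μ S w)) := by
      intro t ht
      rw [← Finset.sum_sub_distrib]
      apply Finset.sum_le_sum
      intro w hw
      exact step_key hμ hS hℓ hSpos hΛS (Finset.mem_range.1 ht) hw
    calc ∑ t ∈ Finset.range n, ((∑ w ∈ strs t, Pf t w) - ∑ w ∈ strs t, Qf t w)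
        ≤ ∑ t ∈ Finset.range n,
            ∑ w ∈ strs t, (2 * DW μ S w + 2 * Real.sqrt (Qf t w * DW μ S w)) :=
          Finset.sum_le_sum h1
      _ = 2 * DN + 2 * ∑ t ∈ Finset.range n, ∑ w ∈ strs t,
            Real.sqrt (Qf t w * DW μ S w) := by
          rw [hDNd, Finset.mul_sum, Finset.mul_sum, ← Finset.sum_add_distrib]
          apply Finset.sum_congr rfl
          intro t _
          rw [Finset.mul_sum, Finset.mul_sum, ← Finset.sum_add_distrib]
  -- Cauchy–Schwarz
  have hCS : ∑ t ∈ Finset.range n, ∑ w ∈ strs t, Real.sqrt (Qf t w * DW μ S w)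
      ≤ Real.sqrt (Loss n ℓ μ Λμ * DN) := by
    rw [Finset.sum_sigma' (Finset.range n) (fun t => strs t)
      (fun t w => Real.sqrt (Qf t w * DW μ S w))]
    have hTnn : 0 ≤ ∑ x ∈ (Finset.range n).sigma (fun t => strs t),
        Real.sqrt (Qf x.fst x.snd * DW μ S x.snd) :=
      Finset.sum_nonneg (fun x _ => Real.sqrt_nonneg _)
    rw [Real.le_sqrt hTnn (by positivity)]
    have hsq : (∑ x ∈ (Finset.range n).sigma (fun t => strs t),
        Real.sqrt (Qf x.fst x.snd * DW μ S x.snd))^2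
      ≤ (∑ x ∈ (Finset.range n).sigma (fun t => strs t), Qf x.fst x.snd)
        * (∑ x ∈ (Finset.range n).sigma (fun t => strs t), DW μ S x.snd) := by
      have := Finset.sum_mul_sq_le_sq_mul_sq ((Finset.range n).sigma (fun t => strs t))
        (fun x => Real.sqrt (Qf x.fst x.snd)) (fun x => Real.sqrt (DW μ S x.snd))
      have e1 : ∀ x ∈ (Finset.range n).sigma (fun t => strs t),
          Real.sqrt (Qf x.fst x.snd * DW μ S x.snd)
            = Real.sqrt (Qf x.fst x.snd) * Real.sqrt (DW μ S x.snd) := by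
        intro x _
        exact Real.sqrt_mul (hQ0 _ _) _
      rw [Finset.sum_congr rfl e1]
      have e2 : ∀ x ∈ (Finset.range n).sigma (fun t => strs t),
          Real.sqrt (Qf x.fst x.snd)^2 = Qf x.fst x.snd := by
        intro x _
        exact Real.sq_sqrt (hQ0 _ _)
      have e3 : ∀ x ∈ (Finset.range n).sigma (fun t => strs t),
          Real.sqrt (DW μ S x.snd)^2 = DW μ S x.snd := by
        intro x hx
        have hx' := Finset.mem_sigma.1 hx
        exact Real.sq_sqrt (hDW0 _ hx'.1 _ hx'.2)
      rw [Finset.sum_congr rfl e2, Finset.sum_congr rfl e3] at this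
      exact this
    have hQsum : (∑ x ∈ (Finset.range n).sigma (fun t => strs t), Qf x.fst x.snd)
        = Loss n ℓ μ Λμ := by
      rw [hLμ_eq, Finset.sum_sigma' (Finset.range n) (fun t => strs t) (fun t w => Qf t w)]
    have hDsum : (∑ x ∈ (Finset.range n).sigma (fun t => strs t), DW μ S x.snd) = DN := by
      rw [hDNd, Finset.sum_sigma' (Finset.range n) (fun t => strs t) (fun t w => DW μ S w)]
    rw [hQsum, hDsum] at hsq
    exact hsq
  -- conclude
  have hfinal : Loss n ℓ μ ΛS - Loss n ℓ μ Λμ ≤ 2 * DN + 2 * Real.sqrt (Loss n ℓ μ Λμ * DN) := by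
    linarith [hmain, hCS]
  have hmono : Real.sqrt (Loss n ℓ μ Λμ * DN) ≤ Real.sqrt (Loss n ℓ μ Λμ * Df) :=
    Real.sqrt_le_sqrt (mul_le_mul_of_nonneg_left hDN_le hLμ0)
  calc Loss n ℓ μ ΛS - Loss n ℓ μ Λμ
      ≤ 2 * DN + 2 * Real.sqrt (Loss n ℓ μ Λμ * DN) := hfinal
    _ ≤ 2 * Df + 2 * Real.sqrt (Loss n ℓ μ Λμ * Df) := by linarith [hmono, hDN_le]
end

section
/- Let S be a semimeasure and x_{1:∞} an infinite binary sequence such that S(x_{1:n}) ≥ c/(a + b·n)^d for all n ∈ ℕ, where c > 0, a ≥ 1, b ≥ 0, d ≥ 0. Then for every n, the number of indices t ∈ {1,…,n} with S(x_{1:t}) ≤ S(x_{1:t−1})/2 is at most d·log₂(a + b·n) − log₂ c. -/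
lemma semi_mono {S : List Bool → ℝ} (hS : IsSemimeasure S) (l : List Bool) (b : Bool) :
    S (l ++ [b]) ≤ S l := by
  obtain ⟨h0, -, h2⟩ := hS
  cases b
  · linarith [h2 l, h0 (l ++ [true])]
  · linarith [h2 l, h0 (l ++ [false])]

lemma ofFn_succ_concat (x : ℕ → Bool) (t : ℕ) :
    (List.ofFn fun i : Fin (t + 1) => x i) = (List.ofFn fun i : Fin t => x i) ++ [x t] := by
  rw [List.ofFn_succ']
  simp [List.concat_eq_append, Fin.coe_castSucc]

/-- The core of the Corollary to Theorem 1 and of Theorem 2 of the paper: if a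
semimeasure `S` satisfies `S(x_{1:n}) ≥ c/(a + b·n)^d` along the sequence
`x_{1:∞}`, then for every `n` the number of indices `t ∈ {1,…,n}` with
`S(x_{1:t}) ≤ S(x_{1:t−1})/2` is at most `d·log₂(a + b·n) − log₂ c`. -/
theorem stmt_8 (S : List Bool → ℝ) (x : ℕ → Bool) (c a b d : ℝ)
    (hS : IsSemimeasure S)
    (hc : 0 < c) (ha : 1 ≤ a) (hb : 0 ≤ b) (hd : 0 ≤ d)
    (hlb : ∀ n : ℕ, c / (a + b * n) ^ d ≤ S (List.ofFn fun i : Fin n => x i)) :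
    ∀ n : ℕ,
      (((Finset.range n).filter fun t =>
          S (List.ofFn fun i : Fin (t + 1) => x i) ≤
            S (List.ofFn fun i : Fin t => x i) / 2).card : ℝ) ≤
        d * Real.logb 2 (a + b * n) - Real.logb 2 c := by
  intro n
  set p : ℕ → Prop := fun t =>
      S (List.ofFn fun i : Fin (t + 1) => x i) ≤
        S (List.ofFn fun i : Fin t => x i) / 2 with hp
  -- key: S(x_{1:n}) ≤ (1/2)^(card)
  have key : ∀ m : ℕ, S (List.ofFn fun i : Fin m => x i) ≤
      (1/2 : ℝ) ^ ((Finset.range m).filter p).card := by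
    intro m
    induction m with
    | zero => simpa using hS.2.1
    | succ m ih =>
      rw [Finset.range_add_one, Finset.filter_insert]
      by_cases hm : p m
      · rw [if_pos hm, Finset.card_insert_of_notMem (by simp)]
        have h1 : S (List.ofFn fun i : Fin (m+1) => x i) ≤
            S (List.ofFn fun i : Fin m => x i) / 2 := hm
        calc S (List.ofFn fun i : Fin (m+1) => x i) ≤ S (List.ofFn fun i : Fin m => x i) / 2 := h1
          _ ≤ (1/2:ℝ) ^ ((Finset.range m).filter p).card / 2 := by linarith
          _ = (1/2:ℝ) ^ (((Finset.range m).filter p).card + 1) := by ring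
      · rw [if_neg hm]
        calc S (List.ofFn fun i : Fin (m+1) => x i)
            = S ((List.ofFn fun i : Fin m => x i) ++ [x m]) := by rw [ofFn_succ_concat]
          _ ≤ S (List.ofFn fun i : Fin m => x i) := semi_mono hS _ _
          _ ≤ _ := ih
  have hbn : (0:ℝ) ≤ b * n := mul_nonneg hb (Nat.cast_nonneg n)
  have habn : (0:ℝ) < a + b * n := by linarith
  have hrpow : (0:ℝ) < (a + b * n) ^ d := Real.rpow_pos_of_pos habn d
  have hk : c / (a + b * n) ^ d ≤ (1/2:ℝ) ^ ((Finset.range n).filter p).card :=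
    le_trans (hlb n) (key n)
  have hposl : (0:ℝ) < c / (a + b * n) ^ d := div_pos hc hrpow
  have hlog := Real.logb_le_logb_of_le (b := 2) (by norm_num) hposl hk
  rw [Real.logb_div hc.ne' hrpow.ne', Real.logb_rpow_eq_mul_logb_of_pos habn,
    Real.logb_pow] at hlog
  have h12 : Real.logb 2 (1/2 : ℝ) = -1 := by
    rw [show (1/2:ℝ) = 2 ^ (-1 : ℝ) by norm_num [Real.rpow_neg_one], Real.logb_rpow (by norm_num) (by norm_num)]
  rw [h12] at hlog
  simp only [hp] at *
  push_cast at hlog ⊢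
  linarith
end

section
/- Let ρ be a semimeasure and x_{1:∞} an infinite binary sequence with ρ(x_{1:n}) > 0. Then Σ_{t=1}^n (1 − ρ(x_t|x_{1:t−1})) ≤ −ln ρ(x_{1:n}). Consequently, if ρ(x_{1:n}) ≥ c/(a + b·n)^d with c > 0, a ≥ 1, b ≥ 0, d ≥ 0, then Σ_{t=1}^n |1 − ρ(x_t|x_{1:t−1})| ≤ d·ln(a + b·n) − ln c. -/
/-- Lemma 10 of the paper, in abstract form: for a semimeasure `ρ` with
`ρ(x_{1:n}) > 0`, `∑_{t=1}^n (1 − ρ(x_t|x_{1:t−1})) ≤ −ln ρ(x_{1:n})`;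
consequently, if `ρ(x_{1:n}) ≥ c/(a + b·n)^d`, then
`∑_{t=1}^n |1 − ρ(x_t|x_{1:t−1})| ≤ d·ln(a + b·n) − ln c`. -/
theorem stmt_9 (ρ : List Bool → ℝ) (x : ℕ → Bool) (n : ℕ)
    (hρ : IsSemimeasure ρ)
    (hpos : 0 < ρ (List.ofFn fun i : Fin n => x i)) :
    (∑ t ∈ Finset.range n,
        (1 - ρ (List.ofFn fun i : Fin (t + 1) => x i) /
          ρ (List.ofFn fun i : Fin t => x i))) ≤
      -Real.log (ρ (List.ofFn fun i : Fin n => x i)) ∧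
    ∀ c a b d : ℝ, 0 < c → 1 ≤ a → 0 ≤ b → 0 ≤ d →
      c / (a + b * n) ^ d ≤ ρ (List.ofFn fun i : Fin n => x i) →
      (∑ t ∈ Finset.range n,
          |1 - ρ (List.ofFn fun i : Fin (t + 1) => x i) /
            ρ (List.ofFn fun i : Fin t => x i)|) ≤
        d * Real.log (a + b * n) - Real.log c := by
  obtain ⟨hnn, hroot, hsub⟩ := hρ
  set L : ℕ → List Bool := fun t => List.ofFn fun i : Fin t => x i with hL
  have hsucc : ∀ t, L (t + 1) = L t ++ [x t] := by
    intro t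
    rw [hL]
    simp only [List.ofFn_succ', List.concat_eq_append, Fin.val_last, Fin.coe_castSucc]
  have hmono : ∀ t, ρ (L (t + 1)) ≤ ρ (L t) := by
    intro t
    rw [hsucc t]
    calc ρ (L t ++ [x t]) ≤ ρ (L t ++ [false]) + ρ (L t ++ [true]) := by
          cases x t
          · linarith [hnn (L t ++ [true])]
          · linarith [hnn (L t ++ [false])]
      _ ≤ ρ (L t) := hsub _
  have hanti : ∀ s t, s ≤ t → ρ (L t) ≤ ρ (L s) := by
    intro s t hst
    induction t, hst using Nat.le_induction with
    | base => exact le_refl _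
    | succ k hk ih => exact (hmono k).trans ih
  have hposall : ∀ t, t ≤ n → 0 < ρ (L t) := fun t ht =>
    lt_of_lt_of_le hpos (hanti t n ht)
  -- first part
  have key : (∑ t ∈ Finset.range n, (1 - ρ (L (t + 1)) / ρ (L t)))
      ≤ -Real.log (ρ (L n)) := by
    have hterm : ∀ t ∈ Finset.range n,
        1 - ρ (L (t + 1)) / ρ (L t) ≤
          -(Real.log (ρ (L (t + 1))) - Real.log (ρ (L t))) := by
      intro t ht
      have ht' := Finset.mem_range.mp ht
      have hpt : 0 < ρ (L t) := hposall t ht'.le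
      have hpt1 : 0 < ρ (L (t + 1)) := hposall (t + 1) ht'
      have hr : 0 < ρ (L (t + 1)) / ρ (L t) := div_pos hpt1 hpt
      have := Real.log_le_sub_one_of_pos hr
      rw [Real.log_div hpt1.ne' hpt.ne'] at this
      linarith
    calc (∑ t ∈ Finset.range n, (1 - ρ (L (t + 1)) / ρ (L t)))
        ≤ ∑ t ∈ Finset.range n, -(Real.log (ρ (L (t + 1))) - Real.log (ρ (L t))) :=
          Finset.sum_le_sum hterm
      _ = -(Real.log (ρ (L n)) - Real.log (ρ (L 0))) := by
          rw [Finset.sum_neg_distrib, Finset.sum_range_sub (fun t => Real.log (ρ (L t)))]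
      _ ≤ -Real.log (ρ (L n)) := by
          have h0 : Real.log (ρ (L 0)) ≤ 0 := by
            have : L 0 = [] := by simp [hL]
            rw [this]
            exact Real.log_nonpos (hnn []) hroot
          linarith
  refine ⟨key, ?_⟩
  intro c a b d hc ha hb hd hbound
  have habs : (∑ t ∈ Finset.range n, |1 - ρ (L (t + 1)) / ρ (L t)|)
      = ∑ t ∈ Finset.range n, (1 - ρ (L (t + 1)) / ρ (L t)) := by
    apply Finset.sum_congr rfl
    intro t ht
    have ht' := Finset.mem_range.mp ht
    have hpt : 0 < ρ (L t) := hposall t ht'.le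
    have hle : ρ (L (t + 1)) / ρ (L t) ≤ 1 :=
      (div_le_one hpt).mpr (hmono t)
    rw [abs_of_nonneg (by linarith)]
  have hab : (1 : ℝ) ≤ a + b * n := by
    have : (0:ℝ) ≤ b * n := mul_nonneg hb (Nat.cast_nonneg n)
    linarith
  have habpos : (0:ℝ) < a + b * n := by linarith
  have hcd : (0:ℝ) < c / (a + b * n) ^ d :=
    div_pos hc (Real.rpow_pos_of_pos habpos d)
  have hlog : -Real.log (ρ (L n)) ≤ d * Real.log (a + b * n) - Real.log c := by
    have := Real.log_le_log hcd hbound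
    rw [Real.log_div hc.ne' (Real.rpow_pos_of_pos habpos d).ne',
      Real.log_rpow habpos] at this
    linarith
  rw [habs]
  exact key.trans hlog
end

section
/- Let P be a prefix-free set of finite binary strings and t : P → [1,∞) a function with t(p) ≥ |p| for every p ∈ P, and let k ∈ ℕ. Then Σ_{p ∈ P, |p| > k or t(p) > 2^k} 2^{-|p|}/t(p) ≤ 2^{-k} + 1/(k+1) ≤ 2/(k+1). -/
/-- A set of finite binary strings is prefix-free if no element is a proper
prefix of another element. -/
def PrefixFree (P : Set (List Bool)) : Prop :=
  ∀ p ∈ P, ∀ q ∈ P, p <+: q → p = q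

/-- Finite Kraft inequality in ℕ. -/
lemma kraft_nat (n : ℕ) (F : Finset (List Bool))
    (hlen : ∀ p ∈ F, p.length ≤ n)
    (hpf : ∀ p ∈ F, ∀ q ∈ F, p <+: q → p = q) :
    ∑ p ∈ F, 2 ^ (n - p.length) ≤ 2 ^ n := by
  classical
  set E : List Bool → Finset (List Bool) :=
    fun p => Finset.univ.image (fun f : Fin (n - p.length) → Bool => p ++ List.ofFn f) with hE
  have hcard : ∀ p : List Bool, (E p).card = 2 ^ (n - p.length) := by
    intro p
    rw [hE]
    rw [Finset.card_image_of_injective _ (fun f g h => by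
      exact List.ofFn_injective (List.append_cancel_left h))]
    simp [Finset.card_univ]
  have hdisj : ∀ p ∈ F, ∀ q ∈ F, p ≠ q → Disjoint (E p) (E q) := by
    intro p hp q hq hne
    rw [Finset.disjoint_left]
    intro x hxp hxq
    simp only [hE, Finset.mem_image, Finset.mem_univ, true_and] at hxp hxq
    obtain ⟨f, rfl⟩ := hxp
    obtain ⟨g, hg⟩ := hxq
    have h1 : p <+: q ++ List.ofFn g := ⟨List.ofFn f, hg.symm⟩
    have h2 : q <+: q ++ List.ofFn g := ⟨List.ofFn g, rfl⟩
    rcases List.prefix_or_prefix_of_prefix h1 h2 with h | h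
    · exact hne (hpf p hp q hq h)
    · exact hne (hpf q hq p hp h).symm
  have hsub : F.biUnion E ⊆ Finset.univ.image (List.ofFn : (Fin n → Bool) → List Bool) := by
    intro x hx
    simp only [Finset.mem_biUnion] at hx
    obtain ⟨p, hp, hxp⟩ := hx
    simp only [hE, Finset.mem_image, Finset.mem_univ, true_and] at hxp ⊢
    obtain ⟨f, rfl⟩ := hxp
    have hlx : (p ++ List.ofFn f).length = n := by
      simp [List.length_ofFn, Nat.add_sub_cancel' (hlen p hp)]
    revert hlx
    generalize p ++ List.ofFn f = x
    intro hlx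
    subst hlx
    exact ⟨_, List.ofFn_getElem (xs := x)⟩
  calc ∑ p ∈ F, 2 ^ (n - p.length) = ∑ p ∈ F, (E p).card := by
        simp_rw [hcard]
    _ = (F.biUnion E).card := (Finset.card_biUnion hdisj).symm
    _ ≤ (Finset.univ.image (List.ofFn : (Fin n → Bool) → List Bool)).card :=
        Finset.card_le_card hsub
    _ ≤ Finset.univ.card := Finset.card_image_le
    _ = 2 ^ n := by simp

/-- Kraft inequality for a prefix-free set, in `ENNReal`. -/
lemma kraft (P : Set (List Bool)) (hP : PrefixFree P) :
    ∑' p : P, ((2 : ENNReal) ^ (p : List Bool).length)⁻¹ ≤ 1 := by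
  classical
  rw [ENNReal.tsum_eq_iSup_sum]
  apply iSup_le
  intro s
  set F : Finset (List Bool) := s.image Subtype.val with hF
  have hsum : ∑ a ∈ s, ((2 : ENNReal) ^ (a : List Bool).length)⁻¹
      = ∑ p ∈ F, ((2 : ENNReal) ^ p.length)⁻¹ := by
    rw [hF, Finset.sum_image (fun a _ b _ h => Subtype.ext h)]
  rw [hsum]
  set n : ℕ := F.sup List.length with hn
  have hlen : ∀ p ∈ F, p.length ≤ n := fun p hp => Finset.le_sup hp
  have hpf : ∀ p ∈ F, ∀ q ∈ F, p <+: q → p = q := by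
    intro p hp q hq h
    rw [hF, Finset.mem_image] at hp hq
    obtain ⟨a, _, rfl⟩ := hp
    obtain ⟨b, _, rfl⟩ := hq
    exact hP _ a.2 _ b.2 h
  have key := kraft_nat n F hlen hpf
  have hterm : ∀ p ∈ F, ((2 : ENNReal) ^ p.length)⁻¹
      = (2 : ENNReal) ^ (n - p.length) / 2 ^ n := by
    intro p hp
    rw [ENNReal.eq_div_iff (by positivity) (by simp [ENNReal.pow_ne_top])]
    rw [show (2 : ENNReal) ^ n = 2 ^ (n - p.length) * 2 ^ p.length by
      rw [← pow_add, Nat.sub_add_cancel (hlen p hp)]]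
    rw [mul_assoc, ENNReal.mul_inv_cancel (by positivity) (by simp [ENNReal.pow_ne_top]),
      mul_one]
  rw [Finset.sum_congr rfl hterm]
  simp_rw [div_eq_mul_inv, ← Finset.sum_mul]
  rw [← div_eq_mul_inv,
    ENNReal.div_le_iff (by positivity) (by simp [ENNReal.pow_ne_top]), one_mul]
  calc ∑ p ∈ F, (2 : ENNReal) ^ (n - p.length)
      = ((∑ p ∈ F, 2 ^ (n - p.length) : ℕ) : ENNReal) := by
        push_cast; rfl
    _ ≤ ((2 ^ n : ℕ) : ENNReal) := by exact_mod_cast key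
    _ = 2 ^ n := by push_cast; rfl

/-- The tail estimate in the proof of Theorem 4 of the paper: for a prefix-free
set `P` and running times `t(p) ≥ max(1, |p|)`, the contributions to
`∑_{p ∈ P} 2^{-|p|}/t(p)` from programs with `|p| > k` or `t(p) > 2^k` total at
most `2^{-k} + 1/(k+1) ≤ 2/(k+1)`. -/
theorem stmt_11 (P : Set (List Bool)) (t : List Bool → NNReal) (k : ℕ)
    (hP : PrefixFree P)
    (ht1 : ∀ p ∈ P, 1 ≤ t p)
    (htlen : ∀ p ∈ P, (p.length : NNReal) ≤ t p) :
    (∑' p : {p : List Bool // p ∈ P ∧ (k < p.length ∨ (2 : NNReal) ^ k < t p)},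
        ((2 : ENNReal) ^ p.val.length)⁻¹ / (t p.val : ENNReal)) ≤
      ((2 : ENNReal) ^ k)⁻¹ + ((k : ENNReal) + 1)⁻¹ ∧
    ((2 : ENNReal) ^ k)⁻¹ + ((k : ENNReal) + 1)⁻¹ ≤ 2 / ((k : ENNReal) + 1) := by
  classical
  set f : List Bool → ENNReal := fun p => ((2 : ENNReal) ^ p.length)⁻¹ / (t p : ENNReal)
    with hf
  set S : Set (List Bool) := {p | p ∈ P ∧ (k < p.length ∨ (2 : NNReal) ^ k < t p)} with hS
  set S₁ : Set (List Bool) := {p | p ∈ P ∧ k < p.length} with hS₁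
  set S₂ : Set (List Bool) := {p | p ∈ P ∧ p.length ≤ k ∧ (2 : NNReal) ^ k < t p} with hS₂
  have hpf₁ : PrefixFree S₁ := fun p hp q hq h => hP p hp.1 q hq.1 h
  have hpf₂ : PrefixFree S₂ := fun p hp q hq h => hP p hp.1 q hq.1 h
  constructor
  · have hsplit : (∑' p : S, f p) ≤ (∑' p : S₁, f p) + (∑' p : S₂, f p) := by
      rw [tsum_subtype S f, tsum_subtype S₁ f, tsum_subtype S₂ f, ← ENNReal.tsum_add]
      apply ENNReal.tsum_le_tsum
      intro p
      by_cases hp : p ∈ S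
      · rw [Set.indicator_of_mem hp]
        rcases hp with ⟨hpP, hk | ht⟩
        · calc f p ≤ Set.indicator S₁ f p := by
                rw [Set.indicator_of_mem (by exact ⟨hpP, hk⟩)]
            _ ≤ _ := le_add_right le_rfl
        · by_cases hlen : k < p.length
          · calc f p ≤ Set.indicator S₁ f p := by
                  rw [Set.indicator_of_mem (by exact ⟨hpP, hlen⟩)]
              _ ≤ _ := le_add_right le_rfl
          · calc f p ≤ Set.indicator S₂ f p := by
                  rw [Set.indicator_of_mem (by exact ⟨hpP, le_of_not_gt hlen, ht⟩)]
              _ ≤ _ := le_add_left le_rfl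
      · rw [Set.indicator_of_notMem hp]; exact zero_le
    have h₁ : (∑' p : S₁, f p) ≤ ((k : ENNReal) + 1)⁻¹ := by
      have hbound : ∀ p : S₁, f (p : List Bool)
          ≤ ((2 : ENNReal) ^ (p : List Bool).length)⁻¹ * ((k : ENNReal) + 1)⁻¹ := by
        rintro ⟨p, hpP, hk⟩
        have h1 : ((k : ENNReal) + 1) ≤ (t p : ENNReal) := by
          have h2 : ((k + 1 : ℕ) : NNReal) ≤ t p :=
            le_trans (by exact_mod_cast hk) (htlen p hpP)
          calc ((k : ENNReal) + 1) = ((k + 1 : ℕ) : ENNReal) := by push_cast; ring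
            _ ≤ (t p : ENNReal) := by exact_mod_cast h2
        calc f p ≤ ((2 : ENNReal) ^ p.length)⁻¹ / ((k : ENNReal) + 1) :=
              ENNReal.div_le_div_left h1 _
          _ = ((2 : ENNReal) ^ p.length)⁻¹ * ((k : ENNReal) + 1)⁻¹ := by
              rw [div_eq_mul_inv]
      calc (∑' p : S₁, f p)
          ≤ ∑' p : S₁, ((2 : ENNReal) ^ (p : List Bool).length)⁻¹ * ((k : ENNReal) + 1)⁻¹ :=
            ENNReal.tsum_le_tsum hbound
        _ = (∑' p : S₁, ((2 : ENNReal) ^ (p : List Bool).length)⁻¹) * ((k : ENNReal) + 1)⁻¹ :=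
            ENNReal.tsum_mul_right
        _ ≤ 1 * ((k : ENNReal) + 1)⁻¹ :=
            mul_le_mul_left (kraft S₁ hpf₁) _
        _ = ((k : ENNReal) + 1)⁻¹ := one_mul _
    have h₂ : (∑' p : S₂, f p) ≤ ((2 : ENNReal) ^ k)⁻¹ := by
      have hbound : ∀ p : S₂, f (p : List Bool)
          ≤ ((2 : ENNReal) ^ (p : List Bool).length)⁻¹ * ((2 : ENNReal) ^ k)⁻¹ := by
        rintro ⟨p, hpP, hlen, ht⟩
        have h1 : ((2 : ENNReal) ^ k) ≤ (t p : ENNReal) := by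
          have : ((2 : NNReal) ^ k) ≤ t p := le_of_lt ht
          calc ((2 : ENNReal) ^ k) = (((2 : NNReal) ^ k : NNReal) : ENNReal) := by push_cast; rfl
            _ ≤ (t p : ENNReal) := by exact_mod_cast this
        calc f p ≤ ((2 : ENNReal) ^ p.length)⁻¹ / ((2 : ENNReal) ^ k) :=
              ENNReal.div_le_div_left h1 _
          _ = ((2 : ENNReal) ^ p.length)⁻¹ * ((2 : ENNReal) ^ k)⁻¹ := by
              rw [div_eq_mul_inv]
      calc (∑' p : S₂, f p)
          ≤ ∑' p : S₂, ((2 : ENNReal) ^ (p : List Bool).length)⁻¹ * ((2 : ENNReal) ^ k)⁻¹ :=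
            ENNReal.tsum_le_tsum hbound
        _ = (∑' p : S₂, ((2 : ENNReal) ^ (p : List Bool).length)⁻¹) * ((2 : ENNReal) ^ k)⁻¹ :=
            ENNReal.tsum_mul_right
        _ ≤ 1 * ((2 : ENNReal) ^ k)⁻¹ :=
            mul_le_mul_left (kraft S₂ hpf₂) _
        _ = ((2 : ENNReal) ^ k)⁻¹ := one_mul _
    calc (∑' p : S, f p) ≤ (∑' p : S₁, f p) + (∑' p : S₂, f p) := hsplit
      _ ≤ ((k : ENNReal) + 1)⁻¹ + ((2 : ENNReal) ^ k)⁻¹ := add_le_add h₁ h₂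
      _ = ((2 : ENNReal) ^ k)⁻¹ + ((k : ENNReal) + 1)⁻¹ := add_comm _ _
  · have h1 : ((k : ENNReal) + 1) ≤ (2 : ENNReal) ^ k := by
      have : (k + 1 : ℕ) ≤ 2 ^ k := Nat.succ_le_of_lt ((Nat.lt_two_pow_self (n := k)))
      calc ((k : ENNReal) + 1) = ((k + 1 : ℕ) : ENNReal) := by push_cast; ring
        _ ≤ ((2 ^ k : ℕ) : ENNReal) := by exact_mod_cast this
        _ = (2 : ENNReal) ^ k := by push_cast; rfl
    have h2 : ((2 : ENNReal) ^ k)⁻¹ ≤ ((k : ENNReal) + 1)⁻¹ :=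
      ENNReal.inv_le_inv' h1
    calc ((2 : ENNReal) ^ k)⁻¹ + ((k : ENNReal) + 1)⁻¹
        ≤ ((k : ENNReal) + 1)⁻¹ + ((k : ENNReal) + 1)⁻¹ := add_le_add h2 le_rfl
      _ = 2 * ((k : ENNReal) + 1)⁻¹ := (two_mul _).symm
      _ = 2 / ((k : ENNReal) + 1) := by rw [div_eq_mul_inv]
end

section
/- Let ε ∈ (0, 1/3), and let ρ and σ be semimeasures with (1−ε)·ρ(x) ≤ σ(x) ≤ (1+ε)·ρ(x) for all finite binary strings x. Define the infinite binary sequence x_{1:∞} recursively by x_t = 1 if σ(x_{1:t−1}·0) ≥ σ(x_{1:t−1}·1) and x_t = 0 otherwise. If ρ(x_{1:n}) > 0 for all n, then for every n, Σ_{t=1}^n (1 − ρ(x_t|x_{1:t−1})) ≥ n·(1 − 3ε)/(2(1−ε)). Consequently there are no constants c > 0, a ≥ 1, b ≥ 0, d ≥ 0 such that ρ(x_{1:n}) ≥ c/(a + b·n)^d holds for all n. -/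
lemma stmt13_ofFn_succ (f : ℕ → Bool) (t : ℕ) :
    (List.ofFn fun i : Fin (t+1) => f i) = (List.ofFn fun i : Fin t => f i) ++ [f t] := by
  rw [List.ofFn_succ']
  simp [List.concat_eq_append, Fin.last]

/-- The adversarial-sequence argument at the heart of Theorem 7 of the paper:
if `σ` is an `ε`-approximation of the semimeasure `ρ` (with `ε < 1/3`) and the
sequence `x_{1:∞}` always takes the continuation `σ` deems less likely
(breaking ties with 1), then `∑_{t=1}^n (1 − ρ(x_t|x_{1:t−1})) ≥
n·(1−3ε)/(2(1−ε))`, so `ρ(x_{1:n})` cannot be bounded below by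
`c/(a + b·n)^d` for all `n`. -/
theorem stmt_13 (ε : ℝ) (hε0 : 0 < ε) (hε3 : ε < 1 / 3)
    (ρ σ : List Bool → ℝ)
    (hρ : IsSemimeasure ρ) (hσ : IsSemimeasure σ)
    (hlow : ∀ x, (1 - ε) * ρ x ≤ σ x) (hhigh : ∀ x, σ x ≤ (1 + ε) * ρ x)
    (x : ℕ → Bool)
    (hx : ∀ t : ℕ, (x t = true ↔
      σ ((List.ofFn fun i : Fin t => x i) ++ [true]) ≤
        σ ((List.ofFn fun i : Fin t => x i) ++ [false])))
    (hpos : ∀ n : ℕ, 0 < ρ (List.ofFn fun i : Fin n => x i)) :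
    (∀ n : ℕ, (n : ℝ) * (1 - 3 * ε) / (2 * (1 - ε)) ≤
      ∑ t ∈ Finset.range n,
        (1 - ρ (List.ofFn fun i : Fin (t + 1) => x i) /
          ρ (List.ofFn fun i : Fin t => x i))) ∧
    ¬ ∃ c a b d : ℝ, 0 < c ∧ 1 ≤ a ∧ 0 ≤ b ∧ 0 ≤ d ∧
      ∀ n : ℕ, c / (a + b * n) ^ d ≤ ρ (List.ofFn fun i : Fin n => x i) := by
  set L : ℕ → List Bool := fun n => List.ofFn fun i : Fin n => x i with hL
  set q : ℝ := (1 + ε) / (2 * (1 - ε)) with hq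
  have hε1 : (0:ℝ) < 1 - ε := by linarith
  have hq0 : 0 < q := by positivity
  have hq1 : q < 1 := by
    rw [hq, div_lt_one (by linarith)]; linarith
  -- key step bound
  have key : ∀ t : ℕ, ρ (L (t+1)) ≤ q * ρ (L t) := by
    intro t
    have hsucc : L (t+1) = L t ++ [x t] := stmt13_ofFn_succ x t
    have hhalf : σ (L t ++ [x t]) ≤ σ (L t) / 2 := by
      have hsum := hσ.2.2 (L t)
      cases hb : x t with
      | true =>
          have := (hx t).mp hb
          rw [hb] at *; linarith
      | false =>
          have h2 : ¬ σ ((L t) ++ [true]) ≤ σ ((L t) ++ [false]) := by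
            intro h; exact Bool.false_ne_true (hb ▸ (hx t).mpr h)
          push_neg at h2
          rw [hb] at *; linarith
    have h1 : (1 - ε) * ρ (L (t+1)) ≤ σ (L t ++ [x t]) := hsucc ▸ hlow _
    have h2 : σ (L t) ≤ (1 + ε) * ρ (L t) := hhigh _
    rw [hq]
    rw [div_mul_eq_mul_div, le_div_iff₀ (by linarith)]
    nlinarith [hρ.1 (L t)]
  have hterm : ∀ t : ℕ, ρ (L (t+1)) / ρ (L t) ≤ q := by
    intro t
    rw [div_le_iff₀ (hpos t)]
    exact key t
  have h1mq : 1 - q = (1 - 3 * ε) / (2 * (1 - ε)) := by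
    rw [hq]; field_simp; ring
  constructor
  · intro n
    calc (n : ℝ) * (1 - 3 * ε) / (2 * (1 - ε))
        = ∑ t ∈ Finset.range n, (1 - q) := by
          rw [Finset.sum_const, Finset.card_range, h1mq, nsmul_eq_mul, mul_div_assoc]
      _ ≤ _ := by
          apply Finset.sum_le_sum
          intro t _
          have := hterm t
          linarith
  · rintro ⟨c, a, b, d, hc, ha, hb, hd, hbound⟩
    -- geometric decay
    have geom : ∀ n : ℕ, ρ (L n) ≤ q ^ n := by
      intro n
      induction n with
      | zero => simpa [hL] using hρ.2.1
      | succ n ih =>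
          calc ρ (L (n+1)) ≤ q * ρ (L n) := key n
            _ ≤ q * q ^ n := by nlinarith
            _ = q ^ (n+1) := by ring
    have hab : ∀ n : ℕ, 0 < a + b * n := fun n => by positivity
    have hmain : ∀ n : ℕ, c ≤ (a + b) ^ d * ((n:ℝ) + 1) ^ d * q ^ n := by
      intro n
      have h1 : c / (a + b * n) ^ d ≤ q ^ n := le_trans (hbound n) (geom n)
      have h2 : c ≤ (a + b * n) ^ d * q ^ n := by
        rw [div_le_iff₀ (Real.rpow_pos_of_pos (hab n) d)] at h1
        linarith [h1]
      have h3 : (a + b * (n:ℝ)) ^ d ≤ ((a + b) * ((n:ℝ)+1)) ^ d := by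
        apply Real.rpow_le_rpow (le_of_lt (hab n)) _ hd
        nlinarith [Nat.cast_nonneg (α := ℝ) n]
      have h4 : ((a + b) * ((n:ℝ)+1)) ^ d = (a + b) ^ d * ((n:ℝ)+1) ^ d :=
        Real.mul_rpow (by linarith) (by positivity)
      calc c ≤ (a + b * n) ^ d * q ^ n := h2
        _ ≤ (a + b) ^ d * ((n:ℝ) + 1) ^ d * q ^ n := by
            rw [← h4]; exact mul_le_mul_of_nonneg_right h3 (by positivity)
    -- tendsto contradiction
    have hqexp : ∀ m : ℕ, q ^ m = Real.exp (-(-Real.log q) * m) := by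
      intro m
      rw [neg_neg, mul_comm, Real.exp_nat_mul, Real.exp_log hq0]
    have hlogq : 0 < -Real.log q := by
      simpa using Real.log_neg hq0 hq1
    have htend : Filter.Tendsto (fun m : ℕ => ((m:ℝ)) ^ d * q ^ m)
        Filter.atTop (nhds 0) := by
      have := (tendsto_rpow_mul_exp_neg_mul_atTop_nhds_zero d (-Real.log q)
        hlogq).comp tendsto_natCast_atTop_atTop (α := ℕ)
      apply this.congr
      intro m
      simp only [Function.comp]
      rw [hqexp m]
    have htend2 : Filter.Tendsto (fun n : ℕ => (a + b) ^ d * ((n:ℝ) + 1) ^ d * q ^ n)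
        Filter.atTop (nhds 0) := by
      have hcomp : Filter.Tendsto (fun n : ℕ => (((n+1:ℕ)):ℝ) ^ d * q ^ (n+1))
          Filter.atTop (nhds 0) := htend.comp (Filter.tendsto_add_atTop_nat 1)
      have : Filter.Tendsto (fun n : ℕ => ((a + b) ^ d / q) * ((((n+1:ℕ)):ℝ) ^ d * q ^ (n+1)))
          Filter.atTop (nhds 0) := by
        simpa using hcomp.const_mul ((a + b) ^ d / q)
      apply this.congr
      intro n
      push_cast
      field_simp
      ring
    have := htend2.eventually (eventually_lt_nhds hc)
    obtain ⟨n, hn⟩ := this.exists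
    exact absurd (hmain n) (not_le.mpr hn)
end
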